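/- arXiv:math/0603221 — 4 statements merged into one kernel-verified Lean document; each statement's English description precedes it below -/
import Mathlib

section
/- (Variance lemma, λ case.) Let (X_t)_{t∈ℤ} be a strictly stationary, centered real-valued process with E|X_0|^m < ∞ for some m > 2, which is λ-weakly dependent. If Σ_{k=0}^∞ λ(k)^{(m−2)/(m−1)} < ∞, then the series σ² = Σ_{k∈ℤ} Cov(X_0, X_k) converges absolutely (in particular Σ_{k∈ℤ} |Cov(X_0, X_k)| < ∞). -/
open MeasureTheory Filter

section Defs

variable {Ω : Type*} [MeasurableSpace Ω]

/-- Covariance of two real observables. -/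
noncomputable def cov (μ : Measure Ω) (f g : Ω → ℝ) : ℝ :=
  ∫ ω, f ω * g ω ∂μ - (∫ ω, f ω ∂μ) * (∫ ω, g ω ∂μ)

/-- Strict stationarity of a real-valued process indexed by ℤ. -/
def IsStrictlyStationary (μ : Measure Ω) (X : ℤ → Ω → ℝ) : Prop :=
  ∀ (t : ℤ) (n : ℕ) (s : Fin n → ℤ),
    Measure.map (fun ω (i : Fin n) => X (s i + t) ω) μ
      = Measure.map (fun ω (i : Fin n) => X (s i) ω) μ

/-- `a` is a Lipschitz bound for `f` w.r.t. the ℓ¹ distance on tuples. -/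
def LipBound {u : ℕ} (f : (Fin u → ℝ) → ℝ) (a : ℝ) : Prop :=
  ∀ x y, |f x - f y| ≤ a * ∑ i, |x i - y i|

/-- (ε, ψ)-weak dependence in the sense of Doukhan and Louhichi. -/
def WeaklyDependent (μ : Measure Ω) (X : ℤ → Ω → ℝ)
    (ψ : ℕ → ℕ → ℝ → ℝ → ℝ) (ε : ℕ → ℝ) : Prop :=
  (∀ r, 0 ≤ ε r) ∧ Antitone ε ∧ Tendsto ε atTop (nhds 0) ∧
  ∀ (u v : ℕ), 0 < u → 0 < v →
  ∀ (r : ℕ) (s : Fin u → ℤ) (t : Fin v → ℤ),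
    Monotone s → Monotone t → (∀ i j, s i + (r : ℤ) ≤ t j) →
    ∀ (f : (Fin u → ℝ) → ℝ) (g : (Fin v → ℝ) → ℝ) (a b : ℝ),
      (∀ x, |f x| ≤ 1) → (∀ x, |g x| ≤ 1) →
      LipBound f a → LipBound g b → 0 ≤ a → 0 ≤ b →
      |cov μ (fun ω => f (fun i => X (s i) ω)) (fun ω => g (fun i => X (t i) ω))|
        ≤ ψ u v a b * ε r

/-- ψ for κ-weak dependence. -/
def kappaPsi : ℕ → ℕ → ℝ → ℝ → ℝ := fun u v a b => u * v * a * b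
/-- ψ for η-weak dependence. -/
def etaPsi : ℕ → ℕ → ℝ → ℝ → ℝ := fun u v a b => u * a + v * b
/-- ψ for λ-weak dependence. -/
def lambdaPsi : ℕ → ℕ → ℝ → ℝ → ℝ := fun u v a b => u * v * a * b + u * a + v * b

/-- Partial sums S_n = X_1 + ⋯ + X_n. -/
noncomputable def partialSum (X : ℤ → Ω → ℝ) (n : ℕ) (ω : Ω) : ℝ :=
  ∑ i ∈ Finset.Icc 1 n, X (i : ℤ) ω

/-- Convergence in distribution to the Gaussian law N(0, v). -/
def ConvToGaussian (μ : Measure Ω) (S : ℕ → Ω → ℝ) (v : NNReal) : Prop :=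
  ∀ φ : BoundedContinuousFunction ℝ ℝ,
    Tendsto (fun n => ∫ ω, φ (S n ω) ∂μ) atTop
      (nhds (∫ x, φ x ∂(ProbabilityTheory.gaussianReal 0 v)))

/-- Truncated input sequence (Y_{n-j} 1_{|j| ≤ I})_{j ∈ ℤ}. -/
noncomputable def truncSeq (Y : ℤ → Ω → ℝ) (n : ℤ) (I : ℕ) (ω : Ω) : ℤ → ℝ :=
  fun j => if |j| ≤ (I : ℤ) then Y (n - j) ω else 0

/-- Condition (★) with exponent ℓ and weights b. -/
def StarCondition (H : (ℤ → ℝ) → ℝ) (ℓ : ℝ) (b : ℤ → ℝ) : Prop :=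
  ∀ x y : ℤ → ℝ, (Function.support x).Finite → (Function.support y).Finite →
    ∀ s : ℤ, (∀ i, i ≠ s → x i = y i) →
      |H x - H y| ≤ b s * max ((⨆ i, |Function.update x s 0 i|) ^ ℓ) 1 * |x s - y s|

/-- `X n` is the L^p limit of the truncated Bernoulli shifts of `H` applied to `Y`. -/
def IsBernoulliShift (μ : Measure Ω) (Y : ℤ → Ω → ℝ) (H : (ℤ → ℝ) → ℝ)
    (p : ENNReal) (X : ℤ → Ω → ℝ) : Prop :=
  ∀ n : ℤ, MemLp (X n) p μ ∧
    Tendsto (fun I : ℕ => eLpNorm (fun ω => H (truncSeq Y n I ω) - X n ω) p μ)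
      atTop (nhds 0)

end Defs
open Asymptotics

section MyAux

noncomputable def clip (T x : ℝ) : ℝ := max (-T) (min x T)

lemma abs_clip_le {T : ℝ} (hT : 0 ≤ T) (x : ℝ) : |clip T x| ≤ T := by
  rw [abs_le, clip]
  constructor
  · exact le_max_left _ _
  · exact max_le (by linarith) (min_le_right _ _)

lemma clip_eq_self {T x : ℝ} (h : |x| ≤ T) : clip T x = x := by
  rw [abs_le] at h
  rw [clip, min_eq_left h.2, max_eq_right h.1]

lemma abs_rem_le {T : ℝ} (hT : 0 ≤ T) (x : ℝ) : |x - clip T x| ≤ |x| := by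
  rcases le_or_gt (|x|) T with h | h
  · simp [clip_eq_self h, abs_nonneg]
  rcases le_or_gt x 0 with hx | hx
  · have hxT : x < -T := by rw [abs_of_nonpos hx] at h; linarith
    have : clip T x = -T := by rw [clip, min_eq_left (by linarith), max_eq_left (by linarith)]
    rw [this, abs_of_nonpos (by linarith), abs_of_nonpos hx]; linarith
  · have hxT : T < x := by rw [abs_of_pos hx] at h; exact h
    have : clip T x = T := by rw [clip, min_eq_right (by linarith), max_eq_right (by linarith)]
    rw [this, abs_of_nonneg (by linarith), abs_of_pos hx]; linarith

lemma abs_clip_sub_clip (T x y : ℝ) : |clip T x - clip T y| ≤ |x - y| := by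
  unfold clip
  calc |max (-T) (min x T) - max (-T) (min y T)| ≤ |min x T - min y T| := by
        rw [max_comm (-T) _, max_comm (-T) _]; exact abs_max_sub_max_le_abs _ _ _
    _ ≤ |x - y| := by
        rcases le_total x T with h | h <;> rcases le_total y T with h' | h' <;>
          simp [min_eq_left, min_eq_right, *] <;> rw [abs_le] <;>
          constructor <;> rcases abs_le.mp (le_refl |x-y|) with ⟨h1, h2⟩ <;>
          rcases le_or_gt 0 (x - y) with h3 | h3 <;>
          simp [abs_of_nonneg, abs_of_neg, *] at * <;> linarith

lemma measurable_clip (T : ℝ) : Measurable (clip T) := by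
  unfold clip; fun_prop

lemma abs_le_rpow_div {T x p : ℝ} (hT : 0 < T) (hp : 0 ≤ p) (h : T ≤ |x|) :
    |x| ≤ |x| ^ (p + 1) / T ^ p := by
  have hx : 0 < |x| := lt_of_lt_of_le hT h
  have h1 : (1:ℝ) ≤ (|x| / T) ^ p :=
    Real.one_le_rpow ((one_le_div hT).mpr h) hp
  rw [Real.div_rpow (abs_nonneg x) hT.le] at h1
  have hTp : 0 < T ^ p := Real.rpow_pos_of_pos hT p
  rw [Real.rpow_add hx, Real.rpow_one, le_div_iff₀ hTp]
  have h2 : T ^ p ≤ |x| ^ p := (one_le_div hTp).mp h1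
  nlinarith [hx.le]

variable {T m x : ℝ}

lemma rem_bound_C (hT : 0 < T) (hm : 2 < m) : |x - clip T x| ≤ |x| ^ m / T ^ (m - 1) := by
  rcases le_or_gt (|x|) T with h | h
  · rw [clip_eq_self h]; simp
    positivity
  · calc |x - clip T x| ≤ |x| := abs_rem_le hT.le x
      _ ≤ |x| ^ (m - 1 + 1) / T ^ (m - 1) := abs_le_rpow_div hT (by linarith) h.le
      _ = |x| ^ m / T ^ (m - 1) := by norm_num

lemma rem_bound_A (hT : 0 < T) (hm : 2 < m) : T * |x - clip T x| ≤ |x| ^ m / T ^ (m - 2) := by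
  have h := rem_bound_C hT hm (x := x)
  have hsplit : T ^ (m - 1) = T ^ (m - 2) * T := by
    rw [show m - 1 = (m - 2) + 1 by ring, Real.rpow_add hT, Real.rpow_one]
  calc T * |x - clip T x| ≤ T * (|x| ^ m / T ^ (m - 1)) := by
        nlinarith
    _ = |x| ^ m / T ^ (m - 2) := by
        rw [hsplit]; field_simp

lemma rem_bound_B (hT : 0 < T) (hm : 2 < m) : (x - clip T x) ^ 2 ≤ |x| ^ m / T ^ (m - 2) := by
  rcases le_or_gt (|x|) T with h | h
  · rw [clip_eq_self h]; simp
    positivity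
  · have hx : 0 < |x| := lt_trans hT h
    have h1 : |x| ≤ |x| ^ (m - 2 + 1) / T ^ (m - 2) := abs_le_rpow_div hT (by linarith) h.le
    have h2 : |x - clip T x| ≤ |x| := abs_rem_le hT.le x
    have hTp : 0 < T ^ (m - 2) := Real.rpow_pos_of_pos hT _
    have key : |x| * |x| ≤ |x| ^ m / T ^ (m - 2) := by
      rw [le_div_iff₀ hTp] at h1 ⊢
      calc |x| * |x| * T ^ (m - 2) = |x| * (|x| * T ^ (m - 2)) := by ring
        _ ≤ |x| * |x| ^ (m - 2 + 1) := by nlinarith [Real.rpow_nonneg (abs_nonneg x) (m - 2 + 1)]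
        _ = |x| ^ m := by
            nth_rewrite 1 [← Real.rpow_one |x|]
            rw [← Real.rpow_add hx]
            congr 1; ring
    calc (x - clip T x) ^ 2 = |x - clip T x| * |x - clip T x| := by rw [← abs_mul, ← sq, abs_sq]
      _ ≤ |x| * |x| := by nlinarith [abs_nonneg (x - clip T x)]
      _ ≤ _ := key

lemma prod_rem_bound (hT : 0 < T) (hm : 2 < m) (y : ℝ) :
    |x * y - clip T x * clip T y| ≤ (3/2) * (|x| ^ m + |y| ^ m) / T ^ (m - 2) := by
  have hv : |clip T y| ≤ T := abs_clip_le hT.le y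
  have hA1 := rem_bound_A (x := x) hT hm
  have hA2 := rem_bound_A (x := y) hT hm
  have hB1 := rem_bound_B (x := x) hT hm
  have hB2 := rem_bound_B (x := y) hT hm
  have habs : |x| ≤ T + |x - clip T x| := by
    calc |x| = |clip T x + (x - clip T x)| := by ring_nf
      _ ≤ |clip T x| + |x - clip T x| := abs_add_le _ _
      _ ≤ T + |x - clip T x| := by linarith [abs_clip_le hT.le x]
  have step : |x * y - clip T x * clip T y|
      ≤ |x| * |y - clip T y| + |clip T y| * |x - clip T x| := by
    calc |x * y - clip T x * clip T y|
        = |x * (y - clip T y) + clip T y * (x - clip T x)| := by ring_nf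
      _ ≤ |x * (y - clip T y)| + |clip T y * (x - clip T x)| := abs_add_le _ _
      _ = |x| * |y - clip T y| + |clip T y| * |x - clip T x| := by rw [abs_mul, abs_mul]
  have hsq : |x - clip T x| * |y - clip T y|
      ≤ ((x - clip T x) ^ 2 + (y - clip T y) ^ 2) / 2 := by
    nlinarith [sq_abs (x - clip T x), sq_abs (y - clip T y),
      sq_nonneg (|x - clip T x| - |y - clip T y|)]
  have h1 : |x| * |y - clip T y| ≤ T * |y - clip T y| + |x - clip T x| * |y - clip T y| := by
    nlinarith [abs_nonneg (y - clip T y)]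
  have h2 : |clip T y| * |x - clip T x| ≤ T * |x - clip T x| := by
    nlinarith [abs_nonneg (x - clip T x)]
  have hd : (3/2) * (|x| ^ m + |y| ^ m) / T ^ (m - 2)
      = |x| ^ m / T ^ (m - 2) + |y| ^ m / T ^ (m - 2)
        + (|x| ^ m / T ^ (m - 2) + |y| ^ m / T ^ (m - 2)) / 2 := by ring
  rw [hd]
  linarith

section Aux2

lemma abs_int_le {Ω : Type*} [MeasurableSpace Ω] (μ : Measure Ω) (f : Ω → ℝ) :
    |∫ ω, f ω ∂μ| ≤ ∫ ω, |f ω| ∂μ := by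
  simpa [Real.norm_eq_abs] using MeasureTheory.norm_integral_le_integral_norm (μ := μ) f

lemma cov_const_mul {Ω : Type*} [MeasurableSpace Ω] (μ : Measure Ω) (c : ℝ) (f g : Ω → ℝ) :
    cov μ (fun ω => c * f ω) (fun ω => c * g ω) = c ^ 2 * cov μ f g := by
  simp only [cov]
  rw [show (fun ω => (c * f ω) * (c * g ω)) = fun ω => c ^ 2 * (f ω * g ω) by
    funext ω; ring]
  rw [MeasureTheory.integral_const_mul, MeasureTheory.integral_const_mul,
    MeasureTheory.integral_const_mul]
  ring

lemma cov_comm {Ω : Type*} [MeasurableSpace Ω] (μ : Measure Ω) (f g : Ω → ℝ) :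
    cov μ f g = cov μ g f := by
  simp only [cov]
  rw [show (fun ω => f ω * g ω) = fun ω => g ω * f ω by funext ω; ring]
  ring

lemma opt_lemma {c L L0 K m : ℝ} (hm : 2 < m) (hc : 0 ≤ c) (hL : 0 ≤ L) (hLL0 : L ≤ L0)
    (hK : 0 ≤ K)
    (h : ∀ T : ℝ, 0 < T → c ≤ (1 + 2 * T) * L + K / T ^ (m - 2)) :
    c ≤ (L0 ^ (1 / (m - 1)) + 2 + K) * L ^ ((m - 2) / (m - 1)) := by
  have hm1 : (0:ℝ) < m - 1 := by linarith
  have hm2 : (0:ℝ) < m - 2 := by linarith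
  have hL0 : 0 ≤ L0 := le_trans hL hLL0
  rcases eq_or_lt_of_le hL with hLz | hLpos
  · -- L = 0
    have hc0 : c ≤ 0 := by
      have hlim : Filter.Tendsto (fun T : ℝ => K / T ^ (m - 2)) Filter.atTop (nhds 0) := by
        have h1 : Filter.Tendsto (fun T : ℝ => K * T ^ (-(m - 2))) Filter.atTop (nhds (K * 0)) :=
          (tendsto_rpow_neg_atTop hm2).const_mul K
        rw [mul_zero] at h1
        apply h1.congr'
        filter_upwards [Filter.eventually_gt_atTop (0:ℝ)] with T hT
        rw [Real.rpow_neg hT.le, div_eq_mul_inv]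
      refine ge_of_tendsto hlim ?_
      filter_upwards [Filter.eventually_gt_atTop (0:ℝ)] with T hT
      have := h T hT
      rw [← hLz] at this
      linarith
    have hθ : L ^ ((m - 2) / (m - 1)) = 0 := by
      rw [← hLz, Real.zero_rpow (by positivity)]
    rw [hθ, mul_zero]
    exact hc0
  · set T := L ^ (-(1 / (m - 1))) with hTdef
    have hTpos : 0 < T := Real.rpow_pos_of_pos hLpos _
    have e1 : T * L = L ^ ((m - 2) / (m - 1)) := by
      rw [hTdef]
      nth_rewrite 2 [← Real.rpow_one L]
      rw [← Real.rpow_add hLpos]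
      congr 1
      field_simp
      ring
    have e2 : K / T ^ (m - 2) = K * L ^ ((m - 2) / (m - 1)) := by
      rw [hTdef, ← Real.rpow_mul hL]
      rw [show -(1 / (m - 1)) * (m - 2) = -((m - 2) / (m - 1)) by field_simp]
      rw [Real.rpow_neg hL, div_eq_mul_inv, inv_inv]
    have e4 : L ^ (1 / (m - 1)) * L ^ ((m - 2) / (m - 1)) = L := by
      rw [← Real.rpow_add hLpos,
        show 1 / (m - 1) + (m - 2) / (m - 1) = 1 by field_simp; ring,
        Real.rpow_one]
    have hθnn : 0 ≤ L ^ ((m - 2) / (m - 1)) := Real.rpow_nonneg hL _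
    have hbase : L ^ (1 / (m - 1)) ≤ L0 ^ (1 / (m - 1)) :=
      Real.rpow_le_rpow hL hLL0 (by positivity)
    have := h T hTpos
    calc c ≤ (1 + 2 * T) * L + K / T ^ (m - 2) := this
      _ = L + 2 * (T * L) + K / T ^ (m - 2) := by ring
      _ = L ^ (1 / (m - 1)) * L ^ ((m - 2) / (m - 1)) + 2 * L ^ ((m - 2) / (m - 1))
          + K * L ^ ((m - 2) / (m - 1)) := by rw [e1, e2, e4]
      _ ≤ L0 ^ (1 / (m - 1)) * L ^ ((m - 2) / (m - 1)) + 2 * L ^ ((m - 2) / (m - 1))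
          + K * L ^ ((m - 2) / (m - 1)) := by nlinarith
      _ = (L0 ^ (1 / (m - 1)) + 2 + K) * L ^ ((m - 2) / (m - 1)) := by ring

end Aux2

end MyAux


theorem variance_lemma_lambda
    {Ω : Type*} [MeasurableSpace Ω] (μ : Measure Ω) [IsProbabilityMeasure μ]
    (X : ℤ → Ω → ℝ) (hmeas : ∀ t, Measurable (X t))
    (hstat : IsStrictlyStationary μ X)
    (hcent : ∫ ω, X 0 ω ∂μ = 0)
    (m : ℝ) (hm : 2 < m)
    (hmom : Integrable (fun ω => |X 0 ω| ^ m) μ)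
    (lamCoef : ℕ → ℝ) (hdep : WeaklyDependent μ X lambdaPsi lamCoef)
    (hsum : Summable (fun k : ℕ => lamCoef k ^ ((m - 2) / (m - 1)))) :
    Summable (fun k : ℤ => |cov μ (X 0) (X k)|) := by
  obtain ⟨hε0, hεanti, _, hcov⟩ := hdep
  have hm1 : (0:ℝ) < m - 1 := by linarith
  have hm2 : (0:ℝ) < m - 2 := by linarith
  set M := ∫ ω, |X 0 ω| ^ m ∂μ with hMdef
  have hM0 : 0 ≤ M := integral_nonneg fun ω => Real.rpow_nonneg (abs_nonneg _) m
  have hφm : Measurable fun x : ℝ => |x| ^ m := by fun_prop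
  -- distributional shift lemmas
  have hmapeq : ∀ k : ℤ, μ.map (X k) = μ.map (X 0) := by
    intro k
    have h := hstat k 1 (fun _ => (0:ℤ))
    have h2 := congrArg (Measure.map (fun f : Fin 1 → ℝ => f 0)) h
    rw [Measure.map_map (measurable_pi_apply 0) (measurable_pi_lambda _ fun _ => hmeas _),
      Measure.map_map (measurable_pi_apply 0) (measurable_pi_lambda _ fun _ => hmeas _)] at h2
    simpa [Function.comp_def] using h2
  have hshift_int : ∀ (k : ℤ) (φ : ℝ → ℝ), Measurable φ →
      ∫ ω, φ (X k ω) ∂μ = ∫ ω, φ (X 0 ω) ∂μ := by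
    intro k φ hφ
    rw [← integral_map (hmeas k).aemeasurable hφ.aestronglyMeasurable, hmapeq k,
      integral_map (hmeas 0).aemeasurable hφ.aestronglyMeasurable]
  have hshift_intg : ∀ (k : ℤ) (φ : ℝ → ℝ), Measurable φ →
      Integrable (fun ω => φ (X 0 ω)) μ → Integrable (fun ω => φ (X k ω)) μ := by
    intro k φ hφ h0
    have h1 : Integrable φ (μ.map (X 0)) :=
      (integrable_map_measure hφ.aestronglyMeasurable (hmeas 0).aemeasurable).mpr h0
    rw [← hmapeq k] at h1
    exact (integrable_map_measure hφ.aestronglyMeasurable (hmeas k).aemeasurable).mp h1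
  have hmomk : ∀ k : ℤ, Integrable (fun ω => |X k ω| ^ m) μ :=
    fun k => hshift_intg k _ hφm hmom
  have hMk : ∀ k : ℤ, ∫ ω, |X k ω| ^ m ∂μ = M := fun k => hshift_int k _ hφm
  -- key estimate
  have key : ∀ (k : ℤ) (T : ℝ), 0 < T →
      |cov μ (X 0) (X k)| ≤ (1 + 2 * T) * lamCoef k.natAbs + (4 * M) / T ^ (m - 2) := by
    intro k T hT
    set U : ℤ → Ω → ℝ := fun t ω => clip T (X t ω) with hU
    have hUmeas : ∀ t, Measurable (U t) := fun t => (measurable_clip T).comp (hmeas t)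
    have hUabs : ∀ t ω, |U t ω| ≤ T := fun t ω => abs_clip_le hT.le _
    have hUint : ∀ t, Integrable (U t) μ := fun t =>
      Integrable.mono' (integrable_const T) (hUmeas t).aestronglyMeasurable
        (ae_of_all _ fun ω => by simpa [Real.norm_eq_abs] using hUabs t ω)
    have hRint : ∀ t, Integrable (fun ω => X t ω - U t ω) μ := fun t =>
      Integrable.mono' ((hmomk t).div_const (T ^ (m - 1)))
        ((hmeas t).sub (hUmeas t)).aestronglyMeasurable
        (ae_of_all _ fun ω => by simpa [Real.norm_eq_abs] using rem_bound_C (x := X t ω) hT hm)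
    have hRbound : ∀ t, ∫ ω, |X t ω - U t ω| ∂μ ≤ M / T ^ (m - 1) := by
      intro t
      calc ∫ ω, |X t ω - U t ω| ∂μ ≤ ∫ ω, |X t ω| ^ m / T ^ (m - 1) ∂μ :=
            integral_mono (hRint t).abs ((hmomk t).div_const _)
              (fun ω => rem_bound_C hT hm)
        _ = M / T ^ (m - 1) := by rw [integral_div, hMk t]
    have hXint : ∀ t, Integrable (X t) μ := by
      intro t
      have e : X t = fun ω => U t ω + (X t ω - U t ω) := by funext ω; ring
      rw [e]; exact (hUint t).add (hRint t)
    have hDint : Integrable (fun ω => X 0 ω * X k ω - U 0 ω * U k ω) μ := by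
      refine Integrable.mono' (((hmom.add (hmomk k)).const_mul (3/2)).div_const (T ^ (m - 2)))
        (((hmeas 0).mul (hmeas k)).sub ((hUmeas 0).mul (hUmeas k))).aestronglyMeasurable
        (ae_of_all _ fun ω => ?_)
      simpa [Real.norm_eq_abs] using prod_rem_bound (x := X 0 ω) hT hm (X k ω)
    have hDbound : ∫ ω, |X 0 ω * X k ω - U 0 ω * U k ω| ∂μ ≤ 3 * M / T ^ (m - 2) := by
      calc ∫ ω, |X 0 ω * X k ω - U 0 ω * U k ω| ∂μ
          ≤ ∫ ω, (3/2) * (|X 0 ω| ^ m + |X k ω| ^ m) / T ^ (m - 2) ∂μ :=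
            integral_mono hDint.abs (((hmom.add (hmomk k)).const_mul (3/2)).div_const _)
              (fun ω => prod_rem_bound hT hm _)
        _ = 3 * M / T ^ (m - 2) := by
            rw [integral_div, integral_const_mul, integral_add hmom (hmomk k), hMk k, ← hMdef]
            ring
    have hUUint : Integrable (fun ω => U 0 ω * U k ω) μ :=
      Integrable.mono' (integrable_const (T * T))
        ((hUmeas 0).mul (hUmeas k)).aestronglyMeasurable
        (ae_of_all _ fun ω => by
          rw [Real.norm_eq_abs, abs_mul]
          exact mul_le_mul (hUabs 0 ω) (hUabs k ω) (abs_nonneg _) hT.le)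
    have hXXint : Integrable (fun ω => X 0 ω * X k ω) μ := by
      have e : (fun ω => X 0 ω * X k ω)
          = fun ω => (X 0 ω * X k ω - U 0 ω * U k ω) + U 0 ω * U k ω := by funext ω; ring
      rw [e]; exact hDint.add hUUint
    have hU0mean : |∫ ω, U 0 ω ∂μ| ≤ M / T ^ (m - 1) := by
      have e : ∫ ω, U 0 ω ∂μ = - ∫ ω, (X 0 ω - U 0 ω) ∂μ := by
        rw [integral_sub (hXint 0) (hUint 0), hcent]; ring
      rw [e, abs_neg]
      exact (abs_int_le μ _).trans (hRbound 0)
    have hUkmean : |∫ ω, U k ω ∂μ| ≤ T := by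
      calc |∫ ω, U k ω ∂μ| ≤ ∫ ω, |U k ω| ∂μ := abs_int_le μ _
        _ ≤ ∫ (_ : Ω), T ∂μ :=
            integral_mono (hUint k).abs (integrable_const T) (fun ω => hUabs k ω)
        _ = T := by simp
    have hsplitT : T ^ (m - 1) = T ^ (m - 2) * T := by
      rw [show m - 1 = (m - 2) + 1 by ring, Real.rpow_add hT, Real.rpow_one]
    have hdiff : |cov μ (X 0) (X k) - cov μ (U 0) (U k)| ≤ 4 * M / T ^ (m - 2) := by
      have e : cov μ (X 0) (X k) - cov μ (U 0) (U k)
          = (∫ ω, (X 0 ω * X k ω - U 0 ω * U k ω) ∂μ)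
            + (∫ ω, U 0 ω ∂μ) * (∫ ω, U k ω ∂μ) := by
        simp only [cov]
        rw [integral_sub hXXint hUUint, hcent]; ring
      rw [e]
      have h1 : |∫ ω, (X 0 ω * X k ω - U 0 ω * U k ω) ∂μ| ≤ 3 * M / T ^ (m - 2) :=
        (abs_int_le μ _).trans hDbound
      have h2 : |(∫ ω, U 0 ω ∂μ) * (∫ ω, U k ω ∂μ)| ≤ M / T ^ (m - 2) := by
        rw [abs_mul]
        calc |∫ ω, U 0 ω ∂μ| * |∫ ω, U k ω ∂μ| ≤ (M / T ^ (m - 1)) * T :=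
              mul_le_mul hU0mean hUkmean (abs_nonneg _) (by positivity)
          _ = M / T ^ (m - 2) := by
              rw [hsplitT]
              have h3 : T ^ (m - 2) ≠ 0 := by positivity
              field_simp
      calc |(∫ ω, (X 0 ω * X k ω - U 0 ω * U k ω) ∂μ)
            + (∫ ω, U 0 ω ∂μ) * (∫ ω, U k ω ∂μ)|
          ≤ |∫ ω, (X 0 ω * X k ω - U 0 ω * U k ω) ∂μ|
            + |(∫ ω, U 0 ω ∂μ) * (∫ ω, U k ω ∂μ)| := abs_add_le _ _
        _ ≤ 3 * M / T ^ (m - 2) + M / T ^ (m - 2) := add_le_add h1 h2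
        _ = 4 * M / T ^ (m - 2) := by ring
    have hcovU : |cov μ (U 0) (U k)| ≤ (1 + 2 * T) * lamCoef k.natAbs := by
      set f : (Fin 1 → ℝ) → ℝ := fun v => clip T (v 0) / T with hf
      have hf1 : ∀ v, |f v| ≤ 1 := by
        intro v
        rw [hf, abs_div, abs_of_pos hT]
        exact div_le_one_of_le₀ (abs_clip_le hT.le _) hT.le
      have hlip : LipBound f (1 / T) := by
        intro v w
        simp only [hf, Fin.sum_univ_one]
        rw [div_sub_div_same, abs_div, abs_of_pos hT]
        calc |clip T (v 0) - clip T (w 0)| / T ≤ |v 0 - w 0| / T :=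
              (div_le_div_iff_of_pos_right hT).mpr (abs_clip_sub_clip T _ _)
          _ = 1 / T * |v 0 - w 0| := by ring
      have ha : (0:ℝ) ≤ 1 / T := by positivity
      have hlam0 : 0 ≤ lamCoef k.natAbs := hε0 _
      have hpsi : lambdaPsi 1 1 (1 / T) (1 / T) * lamCoef k.natAbs
          = (1 / T ^ 2 + 2 / T) * lamCoef k.natAbs := by
        simp only [lambdaPsi, Nat.cast_one]
        congr 1
        field_simp
        ring
      have hmain : |cov μ (fun ω => U 0 ω / T) (fun ω => U k ω / T)|
          ≤ (1 / T ^ 2 + 2 / T) * lamCoef k.natAbs := by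
        rcases le_or_gt 0 k with hk | hk
        · have harg : ∀ i j : Fin 1,
              (fun _ : Fin 1 => (0:ℤ)) i + (k.natAbs : ℤ) ≤ (fun _ : Fin 1 => k) j := by
            intro i j
            simp [Int.natAbs_of_nonneg hk]
          have h := hcov 1 1 one_pos one_pos k.natAbs (fun _ => 0) (fun _ => k)
            monotone_const monotone_const harg f f (1 / T) (1 / T) hf1 hf1 hlip hlip ha ha
          rw [hpsi] at h
          exact h
        · have hknn : (k.natAbs : ℤ) = -k := Int.ofNat_natAbs_of_nonpos hk.le
          have harg : ∀ i j : Fin 1,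
              (fun _ : Fin 1 => k) i + (k.natAbs : ℤ) ≤ (fun _ : Fin 1 => (0:ℤ)) j := by
            intro i j
            simp [hknn]
          have h := hcov 1 1 one_pos one_pos k.natAbs (fun _ => k) (fun _ => 0)
            monotone_const monotone_const harg f f (1 / T) (1 / T) hf1 hf1 hlip hlip ha ha
          rw [hpsi] at h
          rw [cov_comm]
          exact h
      have hcc : cov μ (U 0) (U k)
          = T ^ 2 * cov μ (fun ω => U 0 ω / T) (fun ω => U k ω / T) := by
        rw [← cov_const_mul μ T]
        congr 1 <;> funext ω <;> field_simp
      rw [hcc, abs_mul, abs_of_nonneg (sq_nonneg T)]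
      calc T ^ 2 * |cov μ (fun ω => U 0 ω / T) (fun ω => U k ω / T)|
          ≤ T ^ 2 * ((1 / T ^ 2 + 2 / T) * lamCoef k.natAbs) := by
            have := sq_nonneg T
            nlinarith [abs_nonneg (cov μ (fun ω => U 0 ω / T) (fun ω => U k ω / T))]
        _ = (1 + 2 * T) * lamCoef k.natAbs := by
            field_simp
    calc |cov μ (X 0) (X k)|
        = |(cov μ (X 0) (X k) - cov μ (U 0) (U k)) + cov μ (U 0) (U k)| := by ring_nf
      _ ≤ |cov μ (X 0) (X k) - cov μ (U 0) (U k)| + |cov μ (U 0) (U k)| := abs_add_le _ _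
      _ ≤ 4 * M / T ^ (m - 2) + (1 + 2 * T) * lamCoef k.natAbs := add_le_add hdiff hcovU
      _ = (1 + 2 * T) * lamCoef k.natAbs + 4 * M / T ^ (m - 2) := by ring
  -- optimize over T
  set C : ℝ := lamCoef 0 ^ (1 / (m - 1)) + 2 + 4 * M with hC
  have hbound : ∀ k : ℤ, |cov μ (X 0) (X k)| ≤ C * lamCoef k.natAbs ^ ((m - 2) / (m - 1)) := by
    intro k
    exact opt_lemma hm (abs_nonneg _) (hε0 _) (hεanti (Nat.zero_le _)) (by positivity)
      (fun T hT => key k T hT)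
  have hsummN : Summable (fun n : ℕ => C * lamCoef n ^ ((m - 2) / (m - 1))) := hsum.mul_left C
  have hsummZ : Summable (fun k : ℤ => C * lamCoef k.natAbs ^ ((m - 2) / (m - 1))) := by
    apply Summable.of_nat_of_neg (f := fun k : ℤ => C * lamCoef k.natAbs ^ ((m - 2) / (m - 1)))
    · simpa using hsummN
    · simpa using hsummN
  exact Summable.of_nonneg_of_le (fun k => abs_nonneg _) hbound hsummZ
end

section
/- (Existence for Lipschitz Bernoulli shifts.) Let (Y_t)_{t∈ℤ} be a strictly stationary real-valued process with E|Y_0|^m < ∞ for some m ≥ 1, and let H: ℝ^(ℤ) → ℝ satisfy condition (★) with exponent ℓ = 0 and nonnegative weights (b_s)_{s∈ℤ} such that L = Σ_{j∈ℤ} b_j < ∞. Then for each n the limit X_n = lim_{I→∞} H((Y_{n−j} 1_{|j|≤I})_{j∈ℤ}) exists in L^m, the process (X_n)_{n∈ℤ} is strictly stationary with finite moments of order m, and ‖X_0 − H(0)‖_{L^m} ≤ (Σ_{j∈ℤ} b_j) ‖Y_0‖_{L^m}. -/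
open MeasureTheory Filter

section Defs

variable {Ω : Type*} [MeasurableSpace Ω]

/-- Strict stationarity of a real-valued process indexed by ℤ. -/
def IsStationaryProcess (μ : Measure Ω) (X : ℤ → Ω → ℝ) : Prop :=
  ∀ (t : ℤ) (n : ℕ) (s : Fin n → ℤ),
    Measure.map (fun ω (i : Fin n) => X (s i + t) ω) μ
      = Measure.map (fun ω (i : Fin n) => X (s i) ω) μ

end Defs
open Asymptotics

noncomputable def XofPath (H : (ℤ → ℝ) → ℝ) (n : ℤ) (y : ℤ → ℝ) : ℝ :=
  liminf (fun I : ℕ => H (fun j => if |j| ≤ (I : ℤ) then y (n - j) else 0)) atTop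

lemma measurable_truncApply {H : (ℤ → ℝ) → ℝ} (hH : Measurable H) (n : ℤ) (I : ℕ) :
    Measurable fun y : ℤ → ℝ => H (fun j => if |j| ≤ (I : ℤ) then y (n - j) else 0) := by
  refine hH.comp (measurable_pi_lambda _ fun j => ?_)
  by_cases h : |j| ≤ (I : ℤ)
  · simpa [h] using measurable_pi_apply (n - j)
  · simpa [h] using measurable_const

lemma measurable_XofPath {H : (ℤ → ℝ) → ℝ} (hH : Measurable H) (n : ℤ) :
    Measurable (XofPath H n) := by
  unfold XofPath
  exact Measurable.liminf fun I => measurable_truncApply hH n I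

lemma XofPath_shift (H : (ℤ → ℝ) → ℝ) (k t : ℤ) (y : ℤ → ℝ) :
    XofPath H (k + t) y = XofPath H k (fun j => y (j + t)) := by
  unfold XofPath
  congr 1
  funext I
  congr 1
  funext j
  by_cases h : |j| ≤ (I : ℤ) <;> simp [h, show k + t - j = k - j + t from by ring]

lemma starTelescope {H : (ℤ → ℝ) → ℝ} {bw : ℤ → ℝ}
    (hstar : StarCondition H 0 bw) :
    ∀ (F : Finset ℤ) (x y : ℤ → ℝ), (Function.support x).Finite →
      (Function.support y).Finite →
      (∀ j ∉ F, x j = y j) → |H x - H y| ≤ ∑ s ∈ F, bw s * |x s - y s| := by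
  classical
  intro F
  induction F using Finset.induction_on with
  | empty =>
    intro x y hx hy hxy
    have : x = y := funext fun j => hxy j (by simp)
    simp [this]
  | @insert a F ha ih =>
    intro x y hx hy hxy
    set z := Function.update y a (x a) with hzdef
    have hzy : ∀ i, i ≠ a → z i = y i := fun i hi => Function.update_of_ne hi _ _
    have hsz : (Function.support z).Finite := by
      refine (hy.union (Set.finite_singleton a)).subset ?_
      intro i hi
      by_cases h : i = a
      · exact Or.inr (by simp [h])
      · exact Or.inl (by rw [Function.mem_support] at hi ⊢; rwa [hzy i h] at hi)
    have h1 := hstar z y hsz hy a hzy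
    simp only [Real.rpow_zero, max_self, mul_one] at h1
    have hza : z a = x a := Function.update_self _ _ _
    have h2 : |H x - H z| ≤ ∑ s ∈ F, bw s * |x s - z s| := by
      refine ih x z hx hsz fun j hj => ?_
      by_cases h : j = a
      · rw [h, hza]
      · rw [hzy j h]
        exact hxy j (by simp [h, hj])
    have h3 : ∑ s ∈ F, bw s * |x s - z s| = ∑ s ∈ F, bw s * |x s - y s| := by
      refine Finset.sum_congr rfl fun s hs => ?_
      rw [hzy s (fun h => ha (h ▸ hs))]
    rw [Finset.sum_insert ha]
    have habs : |H x - H y| ≤ |H x - H z| + |H z - H y| := abs_sub_le _ _ _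
    rw [hza] at h1
    linarith [h2, h3 ▸ h2]

lemma support_trunc {Ω : Type*} [MeasurableSpace Ω] (Y : ℤ → Ω → ℝ) (n : ℤ) (K : ℕ) (ω : Ω) :
    (Function.support (truncSeq Y n K ω)).Finite := by
  refine (Set.finite_Icc (-(K:ℤ)) K).subset ?_
  intro j hj
  rw [Function.mem_support] at hj
  have : |j| ≤ (K:ℤ) := by
    by_contra h
    exact hj (if_neg h)
  exact Set.mem_Icc.2 (abs_le.1 this)

lemma trunc_diff {Ω : Type*} [MeasurableSpace Ω] (Y : ℤ → Ω → ℝ)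
    {H : (ℤ → ℝ) → ℝ} {bw : ℤ → ℝ} (hstar : StarCondition H 0 bw)
    (n : ℤ) (ω : Ω) (I J : ℕ) (hIJ : I ≤ J) :
    |H (truncSeq Y n J ω) - H (truncSeq Y n I ω)| ≤
      ∑ j ∈ Finset.Icc (-(J:ℤ)) J \ Finset.Icc (-(I:ℤ)) I, bw j * |Y (n - j) ω| := by
  have key := starTelescope hstar (Finset.Icc (-(J:ℤ)) J \ Finset.Icc (-(I:ℤ)) I)
    (truncSeq Y n J ω) (truncSeq Y n I ω) (support_trunc Y n J ω) (support_trunc Y n I ω) ?_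
  · refine key.trans (le_of_eq (Finset.sum_congr rfl fun j hj => ?_))
    rw [Finset.mem_sdiff, Finset.mem_Icc, Finset.mem_Icc] at hj
    have h1 : |j| ≤ (J:ℤ) := abs_le.2 hj.1
    have h2 : ¬ |j| ≤ (I:ℤ) := fun h => hj.2 (abs_le.1 h)
    simp [truncSeq, h1, h2]
  · intro j hj
    rw [Finset.mem_sdiff, Finset.mem_Icc, Finset.mem_Icc] at hj
    simp only [truncSeq]
    by_cases h1 : |j| ≤ (I:ℤ)
    · have h2 : |j| ≤ (J:ℤ) := h1.trans (by exact_mod_cast hIJ)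
      simp [h1, h2]
    · have h2 : ¬ |j| ≤ (J:ℤ) := by
        intro h
        exact hj ⟨abs_le.1 h, fun hc => h1 (abs_le.2 hc)⟩
      simp [h1, h2]

lemma trunc_zero_diff {Ω : Type*} [MeasurableSpace Ω] (Y : ℤ → Ω → ℝ)
    {H : (ℤ → ℝ) → ℝ} {bw : ℤ → ℝ} (hstar : StarCondition H 0 bw)
    (n : ℤ) (ω : Ω) (J : ℕ) :
    |H (truncSeq Y n J ω) - H (fun _ => 0)| ≤
      ∑ j ∈ Finset.Icc (-(J:ℤ)) J, bw j * |Y (n - j) ω| := by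
  have key := starTelescope hstar (Finset.Icc (-(J:ℤ)) J)
    (truncSeq Y n J ω) (fun _ => 0) (support_trunc Y n J ω) (by simp) ?_
  · refine key.trans (le_of_eq (Finset.sum_congr rfl fun j hj => ?_))
    rw [Finset.mem_Icc] at hj
    have h1 : |j| ≤ (J:ℤ) := abs_le.2 hj
    simp [truncSeq, h1]
  · intro j hj
    rw [Finset.mem_Icc] at hj
    have h1 : ¬ |j| ≤ (J:ℤ) := fun h => hj (abs_le.1 h)
    simp [truncSeq, h1]

theorem bernoulli_shift_exists_lipschitz
    {Ω : Type*} [MeasurableSpace Ω] (μ : Measure Ω) [IsProbabilityMeasure μ]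
    (Y : ℤ → Ω → ℝ) (hmeas : ∀ t, Measurable (Y t))
    (hstat : IsStationaryProcess μ Y)
    (H : (ℤ → ℝ) → ℝ) (hH : Measurable H)
    (bw : ℤ → ℝ) (hbw : ∀ s, 0 ≤ bw s)
    (hstar : StarCondition H 0 bw)
    (hL : Summable bw)
    (m : ℝ) (hm : 1 ≤ m)
    (hmom : Integrable (fun ω => |Y 0 ω| ^ m) μ) :
    ∃ X : ℤ → Ω → ℝ,
      IsBernoulliShift μ Y H (ENNReal.ofReal m) X ∧
      IsStationaryProcess μ X ∧
      eLpNorm (fun ω => X 0 ω - H (fun _ => 0)) (ENNReal.ofReal m) μ ≤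
        ENNReal.ofReal (∑' j : ℤ, bw j) * eLpNorm (Y 0) (ENNReal.ofReal m) μ := by
  classical
  set p : ENNReal := ENNReal.ofReal m with hpdef
  have hm0 : (0:ℝ) < m := lt_of_lt_of_le one_pos hm
  have hp1 : 1 ≤ p := ENNReal.one_le_ofReal.2 hm
  have hp0 : p ≠ 0 := by
    simp only [hpdef, ne_eq, ENNReal.ofReal_eq_zero, not_le]
    exact hm0
  have hptop : p ≠ ⊤ := ENNReal.ofReal_ne_top
  have hpm : p.toReal = m := ENNReal.toReal_ofReal hm0.le
  -- single-coordinate distribution equality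
  have hmapY : ∀ t : ℤ, μ.map (Y t) = μ.map (Y 0) := by
    intro t
    have h := hstat t 1 (fun _ => 0)
    have h1 : Measurable fun ω (_ : Fin 1) => Y ((0:ℤ) + t) ω :=
      measurable_pi_lambda _ fun _ => hmeas _
    have h2 : Measurable fun ω (_ : Fin 1) => Y (0:ℤ) ω :=
      measurable_pi_lambda _ fun _ => hmeas _
    have h3 := congrArg (fun ν => Measure.map (fun v : Fin 1 → ℝ => v 0) ν) h
    rw [Measure.map_map (measurable_pi_apply 0) h1,
      Measure.map_map (measurable_pi_apply 0) h2] at h3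
    simpa [Function.comp_def, zero_add] using h3
  have hY0 : MemLp (Y 0) p μ := by
    have h1 : MemLp (fun ω => ‖Y 0 ω‖ ^ p.toReal) 1 μ := by
      rw [memLp_one_iff_integrable]
      simpa [hpm, Real.norm_eq_abs] using hmom
    have h2 : MemLp (fun ω => ‖Y 0 ω‖ ^ p.toReal) (p / p) μ := by
      rwa [ENNReal.div_self hp0 hptop]
    exact (memLp_norm_rpow_iff (hmeas 0).aestronglyMeasurable hp0 hptop).1 h2
  have heLp : ∀ t : ℤ, eLpNorm (Y t) p μ = eLpNorm (Y 0) p μ := by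
    intro t
    have e1 := eLpNorm_map_measure (μ := μ) (p := p) (f := Y t) (g := id)
      aestronglyMeasurable_id (hmeas t).aemeasurable
    have e2 := eLpNorm_map_measure (μ := μ) (p := p) (f := Y 0) (g := id)
      aestronglyMeasurable_id (hmeas 0).aemeasurable
    rw [Function.id_comp] at e1 e2
    rw [← e1, hmapY t, e2]
  set B : ENNReal := eLpNorm (Y 0) p μ with hBdef
  have hB : B ≠ ⊤ := hY0.2.ne
  have hYt : ∀ t : ℤ, MemLp (Y t) p μ := fun t =>
    ⟨(hmeas t).aestronglyMeasurable, by rw [heLp t]; exact hY0.2⟩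
  have habs : ∀ t : ℤ, Measurable fun ω => |Y t ω| := fun t =>
    continuous_abs.measurable.comp (hmeas t)
  -- the candidate process
  set X : ℤ → Ω → ℝ := fun n ω => XofPath H n (fun j => Y j ω) with hXdef
  have hXmeas : ∀ n, Measurable (X n) := fun n =>
    (measurable_XofPath hH n).comp (measurable_pi_lambda _ fun j => hmeas j)
  have hCmeas : ∀ (n : ℤ) (I : ℕ), Measurable fun ω => H (truncSeq Y n I ω) := by
    intro n I
    exact (measurable_truncApply hH n I).comp (measurable_pi_lambda _ fun j => hmeas j)
  -- lintegral stationarity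
  have hlintY : ∀ t : ℤ, ∫⁻ ω, (‖Y t ω‖₊ : ENNReal) ∂μ = ∫⁻ ω, (‖Y 0 ω‖₊ : ENNReal) ∂μ := by
    intro t
    have hg : Measurable fun x : ℝ => (‖x‖₊ : ENNReal) :=
      measurable_nnnorm.coe_nnreal_ennreal
    rw [← lintegral_map hg (hmeas t), hmapY t, lintegral_map hg (hmeas 0)]
  have hC0 : ∫⁻ ω, (‖Y 0 ω‖₊ : ENNReal) ∂μ < ⊤ := (hY0.integrable hp1).2
  -- a.e. summability
  have hae : ∀ n : ℤ, ∀ᵐ ω ∂μ, Summable fun j : ℤ => bw j * |Y (n - j) ω| := by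
    intro n
    have hmeasg : ∀ j : ℤ, Measurable fun ω => ENNReal.ofReal (bw j * |Y (n - j) ω|) :=
      fun j => (measurable_const.mul (habs (n - j))).ennreal_ofReal
    have hfin : ∫⁻ ω, ∑' j : ℤ, ENNReal.ofReal (bw j * |Y (n - j) ω|) ∂μ < ⊤ := by
      rw [lintegral_tsum fun j => (hmeasg j).aemeasurable]
      have heach : ∀ j : ℤ, ∫⁻ ω, ENNReal.ofReal (bw j * |Y (n - j) ω|) ∂μ
          = ENNReal.ofReal (bw j) * ∫⁻ ω, (‖Y 0 ω‖₊ : ENNReal) ∂μ := by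
        intro j
        have e1 : ∀ ω, ENNReal.ofReal (bw j * |Y (n - j) ω|)
            = ENNReal.ofReal (bw j) * (‖Y (n - j) ω‖₊ : ENNReal) := by
          intro ω
          rw [ENNReal.ofReal_mul (hbw j)]
          congr 1
          rw [← Real.enorm_eq_ofReal (abs_nonneg _), enorm_eq_nnnorm, Real.nnnorm_abs]
        simp_rw [e1]
        rw [lintegral_const_mul _ ((hmeas (n - j)).nnnorm.coe_nnreal_ennreal),
          hlintY (n - j)]
      simp_rw [heach]
      rw [ENNReal.tsum_mul_right, ← ENNReal.ofReal_tsum_of_nonneg hbw hL]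
      exact ENNReal.mul_lt_top ENNReal.ofReal_lt_top hC0
    filter_upwards [ae_lt_top (Measurable.ennreal_tsum hmeasg) hfin.ne] with ω hω
    have h1 : (∑' j : ℤ, ((bw j * |Y (n - j) ω|).toNNReal : ENNReal)) ≠ ⊤ := hω.ne
    have h2 := ENNReal.tsum_coe_ne_top_iff_summable.1 h1
    have h3 := NNReal.summable_coe.2 h2
    exact h3.congr fun j => Real.coe_toNNReal _ (mul_nonneg (hbw j) (abs_nonneg _))
  -- pointwise a.e. convergence
  have hptw : ∀ n : ℤ, ∀ᵐ ω ∂μ,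
      Tendsto (fun I : ℕ => H (truncSeq Y n I ω)) atTop (nhds (X n ω)) := by
    intro n
    filter_upwards [hae n] with ω hs
    set c : ℕ → ℝ := fun I => H (truncSeq Y n I ω) with hc
    have hcauchy : CauchySeq c := by
      rw [Metric.cauchySeq_iff']
      intro ε hε
      obtain ⟨s₀, hs₀⟩ := summable_iff_vanishing.1 hs (Set.Iio ε) (Iio_mem_nhds hε)
      refine ⟨s₀.sup fun j => j.natAbs, fun J hJ => ?_⟩
      set N := s₀.sup fun j => j.natAbs with hN
      have hdisj : Disjoint (Finset.Icc (-(J:ℤ)) J \ Finset.Icc (-(N:ℤ)) N) s₀ := by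
        rw [Finset.disjoint_left]
        intro j hj hj0
        rw [Finset.mem_sdiff, Finset.mem_Icc, Finset.mem_Icc] at hj
        have hle : j.natAbs ≤ N := Finset.le_sup (f := fun j => j.natAbs) hj0
        exact hj.2 (by omega)
      have hlt := hs₀ _ hdisj
      calc dist (c J) (c N) = |c J - c N| := Real.dist_eq _ _
        _ ≤ ∑ j ∈ Finset.Icc (-(J:ℤ)) J \ Finset.Icc (-(N:ℤ)) N, bw j * |Y (n - j) ω| :=
            trunc_diff Y hstar n ω N J hJ
        _ < ε := hlt
    obtain ⟨L, hLim⟩ := cauchySeq_tendsto_of_complete hcauchy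
    have : X n ω = L := hLim.liminf_eq
    rw [this]
    exact hLim
  -- eLpNorm bound for finite-sum majorants
  have hsumbound : ∀ (n : ℤ) (F : Finset ℤ),
      eLpNorm (fun ω => ∑ j ∈ F, bw j * |Y (n - j) ω|) p μ
        ≤ ENNReal.ofReal (∑ j ∈ F, bw j) * B := by
    intro n F
    have heq : (fun ω => ∑ j ∈ F, bw j * |Y (n - j) ω|)
        = ∑ j ∈ F, fun ω => bw j * |Y (n - j) ω| := by
      funext ω; simp [Finset.sum_apply]
    have h1 : eLpNorm (fun ω => ∑ j ∈ F, bw j * |Y (n - j) ω|) p μ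
        ≤ ∑ j ∈ F, eLpNorm (fun ω => bw j * |Y (n - j) ω|) p μ := by
      rw [heq]
      exact eLpNorm_sum_le (fun j _ => (measurable_const.mul (habs (n - j))).aestronglyMeasurable) hp1
    have h2 : ∀ j : ℤ, eLpNorm (fun ω => bw j * |Y (n - j) ω|) p μ
        = ENNReal.ofReal (bw j) * B := by
      intro j
      have e1 : (fun ω => bw j * |Y (n - j) ω|) = bw j • fun ω => |Y (n - j) ω| := by
        funext ω; simp [smul_eq_mul]
      have e2 : (fun ω => |Y (n - j) ω|) = fun ω => ‖Y (n - j) ω‖ := by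
        funext ω; rw [Real.norm_eq_abs]
      rw [e1, eLpNorm_const_smul, e2, eLpNorm_norm, heLp (n - j),
        Real.enorm_eq_ofReal (hbw j)]
    calc eLpNorm (fun ω => ∑ j ∈ F, bw j * |Y (n - j) ω|) p μ
        ≤ ∑ j ∈ F, eLpNorm (fun ω => bw j * |Y (n - j) ω|) p μ := h1
      _ = ∑ j ∈ F, ENNReal.ofReal (bw j) * B := by simp_rw [h2]
      _ = (∑ j ∈ F, ENNReal.ofReal (bw j)) * B := (Finset.sum_mul _ _ _).symm
      _ = ENNReal.ofReal (∑ j ∈ F, bw j) * B := by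
          rw [ENNReal.ofReal_sum_of_nonneg fun j _ => hbw j]
  have hbound : ∀ (n : ℤ) (I J : ℕ), I ≤ J →
      eLpNorm (fun ω => H (truncSeq Y n J ω) - H (truncSeq Y n I ω)) p μ
        ≤ ENNReal.ofReal (∑ j ∈ Finset.Icc (-(J:ℤ)) J \ Finset.Icc (-(I:ℤ)) I, bw j) * B := by
    intro n I J hIJ
    refine le_trans (eLpNorm_mono fun ω => ?_) (hsumbound n _)
    rw [Real.norm_eq_abs, Real.norm_eq_abs]
    exact (trunc_diff Y hstar n ω I J hIJ).trans (le_abs_self _)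
  have hbound0 : ∀ (n : ℤ) (J : ℕ),
      eLpNorm (fun ω => H (truncSeq Y n J ω) - H (fun _ => 0)) p μ
        ≤ ENNReal.ofReal (∑ j ∈ Finset.Icc (-(J:ℤ)) J, bw j) * B := by
    intro n J
    refine le_trans (eLpNorm_mono fun ω => ?_) (hsumbound n _)
    rw [Real.norm_eq_abs, Real.norm_eq_abs]
    exact (trunc_zero_diff Y hstar n ω J).trans (le_abs_self _)
  -- Fatou argument
  have hfatou : ∀ (n : ℤ) (g : Ω → ℝ), Measurable g → ∀ (D : ENNReal),
      (∀ᶠ J in atTop, eLpNorm (fun ω => H (truncSeq Y n J ω) - g ω) p μ ≤ D) →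
      eLpNorm (fun ω => X n ω - g ω) p μ ≤ D := by
    intro n g hg D hD
    have h1 := Lp.eLpNorm_lim_le_liminf_eLpNorm (μ := μ) (p := p)
      (f := fun J ω => H (truncSeq Y n J ω) - g ω)
      (fun J => ((hCmeas n J).sub hg).aestronglyMeasurable)
      (fun ω => X n ω - g ω)
      (by filter_upwards [hptw n] with ω h using h.sub_const _)
    exact h1.trans (liminf_le_of_frequently_le' hD.frequently)
  -- L^m convergence
  have hconv : ∀ n : ℤ, Tendsto
      (fun I : ℕ => eLpNorm (fun ω => H (truncSeq Y n I ω) - X n ω) p μ) atTop (nhds 0) := by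
    intro n
    rw [ENNReal.tendsto_nhds_zero]
    intro ε hε
    obtain ⟨δ, hδpos, hδ⟩ : ∃ δ : ℝ, 0 < δ ∧ ENNReal.ofReal δ * B ≤ ε := by
      by_cases hB0 : B = 0
      · exact ⟨1, one_pos, by simp [hB0]⟩
      · have hmin0 : min ε 1 ≠ 0 := (lt_min hε zero_lt_one).ne'
        have hmintop : min ε 1 ≠ ⊤ :=
          ((min_le_right ε 1).trans_lt ENNReal.one_lt_top).ne
        have hdiv0 : min ε 1 / B ≠ 0 := ENNReal.div_ne_zero.2 ⟨hmin0, hB⟩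
        have hdivtop : min ε 1 / B ≠ ⊤ := by
          intro h
          rw [ENNReal.div_eq_top] at h
          rcases h with ⟨_, h⟩ | ⟨h, _⟩
          · exact hB0 h
          · exact hmintop h
        refine ⟨(min ε 1 / B).toReal, ENNReal.toReal_pos hdiv0 hdivtop, ?_⟩
        rw [ENNReal.ofReal_toReal hdivtop, ENNReal.div_mul_cancel hB0 hB]
        exact min_le_left _ _
    obtain ⟨s₀, hs₀⟩ := summable_iff_vanishing.1 hL (Set.Iio δ) (Iio_mem_nhds hδpos)
    set N := s₀.sup fun j => j.natAbs with hN
    rw [eventually_atTop]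
    refine ⟨N, fun I hI => ?_⟩
    have hcomm : eLpNorm (fun ω => H (truncSeq Y n I ω) - X n ω) p μ
        = eLpNorm (fun ω => X n ω - H (truncSeq Y n I ω)) p μ := by
      have := eLpNorm_neg (fun ω => X n ω - H (truncSeq Y n I ω)) p μ
      simp only [Pi.neg_def, neg_sub] at this
      exact this
    rw [hcomm]
    refine le_trans (hfatou n _ (hCmeas n I) (ENNReal.ofReal δ * B) ?_) hδ
    filter_upwards [eventually_ge_atTop I] with J hJ
    refine (hbound n I J hJ).trans (mul_le_mul_left (ENNReal.ofReal_le_ofReal ?_) _)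
    have hdisj : Disjoint (Finset.Icc (-(J:ℤ)) J \ Finset.Icc (-(I:ℤ)) I) s₀ := by
      rw [Finset.disjoint_left]
      intro j hj hj0
      rw [Finset.mem_sdiff, Finset.mem_Icc, Finset.mem_Icc] at hj
      have hle : j.natAbs ≤ N := Finset.le_sup (f := fun j => j.natAbs) hj0
      exact hj.2 (by omega)
    exact (hs₀ _ hdisj).le
  -- MemLp
  have hMemc : ∀ (n : ℤ) (J : ℕ), MemLp (fun ω => H (truncSeq Y n J ω)) p μ := by
    intro n J
    have h0 : MemLp (fun _ : Ω => H (fun _ => 0)) p μ := memLp_const _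
    have hM : MemLp (fun ω => ∑ j ∈ Finset.Icc (-(J:ℤ)) J, bw j * |Y (n - j) ω|) p μ := by
      refine memLp_finset_sum _ fun j _ => ?_
      have := ((hYt (n - j)).norm).const_mul (bw j)
      simpa [Real.norm_eq_abs] using this
    have hdiff : MemLp (fun ω => H (truncSeq Y n J ω) - H (fun _ => 0)) p μ := by
      refine hM.of_le ((hCmeas n J).sub measurable_const).aestronglyMeasurable ?_
      refine Eventually.of_forall fun ω => ?_
      rw [Real.norm_eq_abs, Real.norm_eq_abs]
      exact (trunc_zero_diff Y hstar n ω J).trans (le_abs_self _)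
    have heq : (fun ω => H (truncSeq Y n J ω))
        = (fun ω => H (truncSeq Y n J ω) - H (fun _ => 0)) + fun _ : Ω => H (fun _ => 0) := by
      funext ω
      show H (truncSeq Y n J ω) = (H (truncSeq Y n J ω) - H fun _ => 0) + H fun _ => 0
      ring
    rw [heq]
    exact hdiff.add h0
  have hMemX : ∀ n : ℤ, MemLp (X n) p μ := by
    intro n
    have hd : MemLp (fun ω => X n ω - H (truncSeq Y n 0 ω)) p μ := by
      refine ⟨((hXmeas n).sub (hCmeas n 0)).aestronglyMeasurable, ?_⟩
      have hb := hfatou n _ (hCmeas n 0) (ENNReal.ofReal (∑' j : ℤ, bw j) * B) ?_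
      · exact lt_of_le_of_lt hb (ENNReal.mul_lt_top ENNReal.ofReal_lt_top hB.lt_top)
      · filter_upwards [eventually_ge_atTop 0] with J hJ
        exact (hbound n 0 J hJ).trans (mul_le_mul_left
          (ENNReal.ofReal_le_ofReal (Summable.sum_le_tsum _ (fun j _ => hbw j) hL)) _)
    have heq : X n = (fun ω => X n ω - H (truncSeq Y n 0 ω)) + fun ω => H (truncSeq Y n 0 ω) := by
      funext ω
      show X n ω = (X n ω - H (truncSeq Y n 0 ω)) + H (truncSeq Y n 0 ω)
      ring
    rw [heq]
    exact hd.add (hMemc n 0)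
  -- stationarity
  have hstatX : IsStationaryProcess μ X := by
    intro t k s
    set T : Ω → (ℤ → ℝ) := fun ω j => Y j ω with hT
    have hTmeas : Measurable T := measurable_pi_lambda _ hmeas
    set Tt : Ω → (ℤ → ℝ) := fun ω j => Y (j + t) ω with hTt
    have hTtmeas : Measurable Tt := measurable_pi_lambda _ fun j => hmeas _
    have hpath : μ.map Tt = μ.map T := by
      haveI i1 : IsProbabilityMeasure (μ.map Tt) :=
        Measure.isProbabilityMeasure_map hTtmeas.aemeasurable
      haveI i2 : IsProbabilityMeasure (μ.map T) :=
        Measure.isProbabilityMeasure_map hTmeas.aemeasurable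
      refine ext_of_generate_finite (measurableCylinders fun _ : ℤ => ℝ)
        generateFrom_measurableCylinders.symm isPiSystem_measurableCylinders
        (fun S hS => ?_) (by simp)
      obtain ⟨F, A, hA, rfl⟩ := (mem_measurableCylinders _).1 hS
      have hproj : Measurable fun f : ℤ → ℝ => fun i : F => f i :=
        measurable_pi_lambda _ fun i => measurable_pi_apply _
      have hcyl : MeasurableSet (cylinder F A) := hproj hA
      rw [Measure.map_apply hTtmeas hcyl, Measure.map_apply hTmeas hcyl]
      set e : Fin (Fintype.card F) ≃ {x // x ∈ F} := (Fintype.equivFin _).symm with he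
      have hk := hstat t (Fintype.card F) fun i => ((e i : ℤ))
      set R : (Fin (Fintype.card F) → ℝ) → ((i : F) → ℝ) := fun v i => v (e.symm i) with hR
      have hRmeas : Measurable R := measurable_pi_lambda _ fun i => measurable_pi_apply _
      have hF1 : Measurable fun ω (i : Fin (Fintype.card F)) => Y ((e i : ℤ) + t) ω :=
        measurable_pi_lambda _ fun i => hmeas _
      have hF0 : Measurable fun ω (i : Fin (Fintype.card F)) => Y ((e i : ℤ)) ω :=
        measurable_pi_lambda _ fun i => hmeas _
      have key := congrArg (fun ν => ν (R ⁻¹' A)) hk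
      rw [Measure.map_apply hF1 (hRmeas hA), Measure.map_apply hF0 (hRmeas hA)] at key
      have h1 : Tt ⁻¹' cylinder F A
          = (fun ω (i : Fin (Fintype.card F)) => Y ((e i : ℤ) + t) ω) ⁻¹' (R ⁻¹' A) := by
        ext ω
        simp only [Set.mem_preimage, mem_cylinder]
        have heq : (R fun i => Y ((e i : ℤ) + t) ω) = fun i : F => Tt ω (i : ℤ) := by
          funext i
          simp only [hR, hTt]
          rw [e.apply_symm_apply]
        rw [heq]
        exact Iff.rfl
      have h0 : T ⁻¹' cylinder F A
          = (fun ω (i : Fin (Fintype.card F)) => Y ((e i : ℤ)) ω) ⁻¹' (R ⁻¹' A) := by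
        ext ω
        simp only [Set.mem_preimage, mem_cylinder]
        have heq : (R fun i => Y ((e i : ℤ)) ω) = fun i : F => T ω (i : ℤ) := by
          funext i
          simp only [hR, hT]
          rw [e.apply_symm_apply]
        rw [heq]
        exact Iff.rfl
      rw [h1, h0]
      exact key
    have hG : Measurable fun y : ℤ → ℝ => fun i : Fin k => XofPath H (s i) y :=
      measurable_pi_lambda _ fun i => measurable_XofPath hH _
    have e4 : (fun ω (i : Fin k) => X (s i + t) ω)
        = (fun y (i : Fin k) => XofPath H (s i) y) ∘ Tt := by
      funext ω
      funext i
      show XofPath H (s i + t) (T ω) = XofPath H (s i) (Tt ω)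
      rw [XofPath_shift]
    have e2 : (fun ω (i : Fin k) => X (s i) ω)
        = (fun y (i : Fin k) => XofPath H (s i) y) ∘ T := rfl
    rw [e4, e2, ← Measure.map_map hG hTtmeas, ← Measure.map_map hG hTmeas, hpath]
  -- final bound
  have hfinal : eLpNorm (fun ω => X 0 ω - H (fun _ => 0)) p μ
      ≤ ENNReal.ofReal (∑' j : ℤ, bw j) * B := by
    refine hfatou 0 _ measurable_const (ENNReal.ofReal (∑' j : ℤ, bw j) * B) ?_
    refine Eventually.of_forall fun J => ?_
    exact (hbound0 0 J).trans (mul_le_mul_left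
      (ENNReal.ofReal_le_ofReal (Summable.sum_le_tsum _ (fun j _ => hbw j) hL)) _)
  exact ⟨X, fun n => ⟨hMemX n, hconv n⟩, hstatX, hfinal⟩
end

section
/- (η-heredity for Lipschitz Bernoulli shifts.) Let (Y_t)_{t∈ℤ} be a strictly stationary real-valued process with E|Y_0| < ∞ which is η-weakly dependent with coefficients η_Y(r), and let H: ℝ^(ℤ) → ℝ satisfy condition (★) with exponent ℓ = 0 and nonnegative weights (b_s)_{s∈ℤ} such that L = Σ_{j∈ℤ} b_j < ∞. Then the Bernoulli shift X_n = H(Y_{n−j}, j∈ℤ) is η-weakly dependent with coefficients η(k) ≤ inf_{r ≥ 0, 2r ≤ k} [ 2 Σ_{|i|≥r} b_i ‖Y_0‖_{L^1} + (2r+1) L η_Y(k−2r) ]. -/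
open MeasureTheory Filter

section Defs

variable {Ω : Type*} [MeasurableSpace Ω]

/-- Strict stationarity of a real-valued process indexed by ℤ. -/
def IsStrictlyStationaryProc (μ : Measure Ω) (X : ℤ → Ω → ℝ) : Prop :=
  ∀ (t : ℤ) (n : ℕ) (s : Fin n → ℤ),
    Measure.map (fun ω (i : Fin n) => X (s i + t) ω) μ
      = Measure.map (fun ω (i : Fin n) => X (s i) ω) μ

end Defs
open Asymptotics

section AuxLemmas
variable {Ω : Type*} [MeasurableSpace Ω]

variable {μ : Measure Ω} [IsProbabilityMeasure μ]

lemma star_diff {H : (ℤ → ℝ) → ℝ} {bw : ℤ → ℝ} (hbw : ∀ s, 0 ≤ bw s)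
    (hstar : StarCondition H 0 bw) (S : Finset ℤ) :
    ∀ x y : ℤ → ℝ, (Function.support x).Finite → (Function.support y).Finite →
      (∀ j ∉ S, x j = y j) → |H x - H y| ≤ ∑ j ∈ S, bw j * |x j - y j| := by
  classical
  induction S using Finset.induction_on with
  | empty =>
    intro x y hx hy hxy
    have : x = y := funext fun j => hxy j (by simp)
    simp [this]
  | @insert s S hs IH =>
    intro x y hx hy hxy
    set x' := Function.update x s (y s) with hx'def
    have hx' : (Function.support x').Finite := by
      apply (hx.union (Set.finite_singleton s)).subset
      intro j hj
      by_cases hjs : j = s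
      · exact Or.inr (by simp [hjs])
      · left
        rwa [Function.support, Set.mem_setOf_eq, hx'def, Function.update_of_ne hjs] at hj
    have h1 : |H x - H x'| ≤ bw s * |x s - y s| := by
      have := hstar x x' hx hx' s (fun i hi => (Function.update_of_ne hi _ _).symm)
      simp only [Real.rpow_zero, max_self, mul_one] at this
      simpa [hx'def, Function.update_self] using this
    have h2 : |H x' - H y| ≤ ∑ j ∈ S, bw j * |x j - y j| := by
      have := IH x' y hx' hy (fun j hj => by
        by_cases hjs : j = s
        · simp [hjs, hx'def, Function.update_self]
        · rw [hx'def, Function.update_of_ne hjs]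
          exact hxy j (by simp [hjs, hj]))
      refine this.trans (le_of_eq (Finset.sum_congr rfl fun j hj => ?_))
      have hjs : j ≠ s := fun h => hs (h ▸ hj)
      rw [hx'def, Function.update_of_ne hjs]
    calc |H x - H y| ≤ |H x - H x'| + |H x' - H y| := abs_sub_le _ _ _
      _ ≤ bw s * |x s - y s| + ∑ j ∈ S, bw j * |x j - y j| := add_le_add h1 h2
      _ = ∑ j ∈ insert s S, bw j * |x j - y j| := (Finset.sum_insert (f := fun j => bw j * |x j - y j|) hs).symm

lemma lipBound_continuous {u : ℕ} {f : (Fin u → ℝ) → ℝ} {a : ℝ} (hf : LipBound f a)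
    (ha : 0 ≤ a) : Continuous f := by
  refine (LipschitzWith.of_dist_le_mul (K := (a * u).toNNReal) fun x y => ?_).continuous
  rw [Real.dist_eq, Real.coe_toNNReal _ (by positivity)]
  calc |f x - f y| ≤ a * ∑ i, |x i - y i| := hf x y
    _ ≤ a * ∑ _i : Fin u, dist x y := by
        have : ∀ i : Fin u, |x i - y i| ≤ dist x y := fun i =>
          (Real.dist_eq (x i) (y i)) ▸ dist_le_pi_dist x y i
        exact mul_le_mul_of_nonneg_left (Finset.sum_le_sum fun i _ => this i) ha
    _ = a * u * dist x y := by
        rw [Finset.sum_const, Finset.card_univ, Fintype.card_fin, nsmul_eq_mul]; ring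

lemma aesm_pi {u : ℕ} (f : Fin u → Ω → ℝ) (hf : ∀ i, AEStronglyMeasurable (f i) μ) :
    AEStronglyMeasurable (fun ω (i : Fin u) => f i ω) μ := by
  refine ⟨fun ω i => (hf i).mk _ ω, ?_, ?_⟩
  · exact (measurable_pi_lambda _ fun i => ((hf i).stronglyMeasurable_mk).measurable).stronglyMeasurable
  · have : ∀ᵐ ω ∂μ, ∀ i, f i ω = (hf i).mk _ ω := ae_all_iff.2 fun i => (hf i).ae_eq_mk
    filter_upwards [this] with ω hω
    exact funext hω

-- single marginal stationarity
lemma mapY_eq (Y : ℤ → Ω → ℝ) (hmeas : ∀ t, Measurable (Y t))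
    (hstat : IsStrictlyStationaryProc μ Y) (t : ℤ) :
    Measure.map (Y t) μ = Measure.map (Y 0) μ := by
  have h := hstat t 1 (fun _ => 0)
  simp only [zero_add] at h
  have e1 : ∀ τ : ℤ, Measure.map (Y τ) μ
      = Measure.map (fun v : Fin 1 → ℝ => v 0) (Measure.map (fun ω (_ : Fin 1) => Y τ ω) μ) := by
    intro τ
    rw [Measure.map_map (measurable_pi_apply 0) (measurable_pi_lambda _ fun _ => hmeas τ)]
    rfl
  rw [e1 t, e1 0, h]

-- integral/integrable transfer along equal maps
lemma transfer_int (f g : Ω → ℝ) (hf : Measurable f) (hg : Measurable g)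
    (h : Measure.map f μ = Measure.map g μ) (hgint : Integrable g μ) :
    Integrable f μ ∧ ∫ ω, |f ω| ∂μ = ∫ ω, |g ω| ∂μ := by
  constructor
  · have : Integrable (fun x : ℝ => x) (Measure.map f μ) := by
      rw [h]
      exact (integrable_map_measure aestronglyMeasurable_id hg.aemeasurable).2 hgint
    exact (integrable_map_measure aestronglyMeasurable_id hf.aemeasurable).1 this
  · have e1 : ∫ ω, |f ω| ∂μ = ∫ x, |x| ∂(Measure.map f μ) := by
      rw [integral_map hf.aemeasurable (measurable_abs.aestronglyMeasurable)]
    have e2 : ∫ ω, |g ω| ∂μ = ∫ x, |x| ∂(Measure.map g μ) := by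
      rw [integral_map hg.aemeasurable (measurable_abs.aestronglyMeasurable)]
    rw [e1, e2, h]

-- cov perturbation
lemma cov_comm_s12 (F G : Ω → ℝ) : cov μ F G = cov μ G F := by
  unfold cov
  congr 1
  · congr 1; funext ω; ring
  · ring

lemma abs_cov_sub_le {F F' G : Ω → ℝ}
    (hF : AEStronglyMeasurable F μ) (hF' : AEStronglyMeasurable F' μ)
    (hG : AEStronglyMeasurable G μ)
    (hFb : ∀ ω, |F ω| ≤ 1) (hF'b : ∀ ω, |F' ω| ≤ 1) (hGb : ∀ ω, |G ω| ≤ 1) :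
    |cov μ F G - cov μ F' G| ≤ 2 * ∫ ω, |F ω - F' ω| ∂μ := by
  have bdd : ∀ (f : Ω → ℝ), AEStronglyMeasurable f μ → (∀ ω, |f ω| ≤ 1) → Integrable f μ :=
    fun f hf hfb => Integrable.mono' (integrable_const 1) hf (ae_of_all _ fun ω => by
      simpa using hfb ω)
  have absint : ∀ h : Ω → ℝ, |∫ ω, h ω ∂μ| ≤ ∫ ω, |h ω| ∂μ := fun h => by
    simpa [Real.norm_eq_abs] using norm_integral_le_integral_norm h
  have hFi := bdd F hF hFb
  have hF'i := bdd F' hF' hF'b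
  have hGi := bdd G hG hGb
  have hFGi : Integrable (fun ω => F ω * G ω) μ :=
    Integrable.mono' (integrable_const 1) (hF.mul hG) (ae_of_all _ fun ω => by
      rw [norm_mul]
      exact mul_le_one₀ (hFb ω) (abs_nonneg _) (hGb ω))
  have hF'Gi : Integrable (fun ω => F' ω * G ω) μ :=
    Integrable.mono' (integrable_const 1) (hF'.mul hG) (ae_of_all _ fun ω => by
      rw [norm_mul]
      exact mul_le_one₀ (hF'b ω) (abs_nonneg _) (hGb ω))
  have hdiffi : Integrable (fun ω => |F ω - F' ω|) μ := (hFi.sub hF'i).abs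
  have key : cov μ F G - cov μ F' G
      = (∫ ω, (F ω - F' ω) * G ω ∂μ) - (∫ ω, F ω - F' ω ∂μ) * ∫ ω, G ω ∂μ := by
    unfold cov
    rw [integral_sub hFi hF'i]
    have : ∫ ω, (F ω - F' ω) * G ω ∂μ = ∫ ω, F ω * G ω ∂μ - ∫ ω, F' ω * G ω ∂μ := by
      rw [← integral_sub hFGi hF'Gi]
      congr 1; funext ω; ring
    rw [this]; ring
  rw [key]
  have h1 : |∫ ω, (F ω - F' ω) * G ω ∂μ| ≤ ∫ ω, |F ω - F' ω| ∂μ := by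
    refine (absint _).trans ?_
    have hprod : Integrable (fun ω => |(F ω - F' ω) * G ω|) μ :=
      (Integrable.mono' hdiffi ((hF.sub hF').mul hG).norm (ae_of_all _ fun ω => by
        rw [Real.norm_eq_abs, abs_abs, abs_mul]
        exact mul_le_of_le_one_right (abs_nonneg _) (hGb ω)))
    refine integral_mono hprod hdiffi fun ω => ?_
    rw [abs_mul]
    exact mul_le_of_le_one_right (abs_nonneg _) (hGb ω)
  have h2 : |(∫ ω, F ω - F' ω ∂μ) * ∫ ω, G ω ∂μ| ≤ ∫ ω, |F ω - F' ω| ∂μ := by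
    rw [abs_mul]
    have hg1 : |∫ ω, G ω ∂μ| ≤ 1 := by
      refine (absint _).trans ?_
      calc ∫ ω, |G ω| ∂μ ≤ ∫ _ω, (1:ℝ) ∂μ := integral_mono hGi.abs (integrable_const 1) hGb
        _ = 1 := by simp
    calc |∫ ω, F ω - F' ω ∂μ| * |∫ ω, G ω ∂μ| ≤ |∫ ω, F ω - F' ω ∂μ| * 1 :=
          mul_le_mul_of_nonneg_left hg1 (abs_nonneg _)
      _ = |∫ ω, F ω - F' ω ∂μ| := mul_one _
      _ ≤ ∫ ω, |F ω - F' ω| ∂μ := absint _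
  calc |(∫ ω, (F ω - F' ω) * G ω ∂μ) - (∫ ω, F ω - F' ω ∂μ) * ∫ ω, G ω ∂μ|
      ≤ |∫ ω, (F ω - F' ω) * G ω ∂μ| + |(∫ ω, F ω - F' ω ∂μ) * ∫ ω, G ω ∂μ| := abs_sub _ _
    _ ≤ 2 * ∫ ω, |F ω - F' ω| ∂μ := by linarith

-- tail tendsto
lemma tail_tendsto (bw : ℤ → ℝ) (hbw : ∀ s, 0 ≤ bw s) (hL : Summable bw) :
    Tendsto (fun r : ℕ => ∑' i : {i : ℤ // (r:ℤ) ≤ |i|}, bw i) atTop (nhds 0) := by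
  rw [Metric.tendsto_atTop]
  intro δ hδ
  have h := tendsto_tsum_compl_atTop_zero bw
  have h2 := h.eventually (Metric.ball_mem_nhds (0:ℝ) hδ)
  rw [eventually_atTop] at h2
  obtain ⟨s0, hs0⟩ := h2
  have hs0' : ∑' a : {x : ℤ // x ∉ s0}, bw a < δ := by
    have := hs0 s0 le_rfl
    rw [Real.dist_eq, sub_zero] at this
    exact (le_abs_self _).trans_lt this
  refine ⟨(s0.sup fun i => i.natAbs) + 1, fun r hr => ?_⟩
  have hT0 : 0 ≤ ∑' i : {i : ℤ // (r:ℤ) ≤ |i|}, bw i := tsum_nonneg fun i => hbw _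
  rw [Real.dist_eq, sub_zero, abs_of_nonneg hT0]
  refine lt_of_le_of_lt ?_ hs0'
  have hmem : ∀ i : ℤ, (r:ℤ) ≤ |i| → i ∉ s0 := by
    intro i hi hin
    have h1 : i.natAbs ≤ s0.sup fun i => i.natAbs := Finset.le_sup hin
    have h2 : (i.natAbs : ℤ) = |i| := Int.abs_eq_natAbs i ▸ rfl
    omega
  refine Summable.tsum_le_tsum_of_inj (fun i => ⟨i.1, hmem i.1 i.2⟩) ?_ (fun c _ => hbw _)
    (fun b => le_rfl) (hL.subtype _) (hL.subtype _)
  intro i j hij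
  exact Subtype.ext (by simpa using congrArg Subtype.val hij)

lemma key1 (Y : ℤ → Ω → ℝ) (hmeas : ∀ t, Measurable (Y t))
    (H : (ℤ → ℝ) → ℝ) (hH : Measurable H)
    (bw : ℤ → ℝ) (hbw : ∀ s, 0 ≤ bw s) (hL : Summable bw)
    (hsd : ∀ (S : Finset ℤ) (x y : ℤ → ℝ), (Function.support x).Finite →
      (Function.support y).Finite → (∀ j ∉ S, x j = y j) →
      |H x - H y| ≤ ∑ j ∈ S, bw j * |x j - y j|)
    (hYint : ∀ τ, Integrable (Y τ) μ)
    (hYabs : ∀ τ, ∫ ω, |Y τ ω| ∂μ = ∫ ω, |Y 0 ω| ∂μ)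
    (X : ℤ → Ω → ℝ)
    (hXm : ∀ n, MemLp (X n) 1 μ)
    (hXlim : ∀ n, Tendsto (fun I : ℕ => eLpNorm (fun ω => H (truncSeq Y n I ω) - X n ω) 1 μ)
      atTop (nhds 0))
    (n : ℤ) (r : ℕ) :
    Integrable (fun ω => X n ω - H (truncSeq Y n r ω)) μ ∧
      ∫ ω, |X n ω - H (truncSeq Y n r ω)| ∂μ
        ≤ (∑' i : {i : ℤ // (r:ℤ) ≤ |i|}, bw i) * ∫ ω, |Y 0 ω| ∂μ := by
  classical
  set M := ∫ ω, |Y 0 ω| ∂μ with hM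
  have hM0 : 0 ≤ M := integral_nonneg fun ω => abs_nonneg _
  set T := ∑' i : {i : ℤ // (r:ℤ) ≤ |i|}, bw i with hT
  have hT0 : 0 ≤ T := tsum_nonneg fun i => hbw _
  -- measurability of truncated shifts
  have htm : ∀ I : ℕ, Measurable (fun ω => truncSeq Y n I ω) := by
    intro I
    apply measurable_pi_lambda
    intro j
    by_cases h : |j| ≤ (I:ℤ) <;> simp only [truncSeq, h, if_true, if_false]
    · exact hmeas _
    · exact measurable_const
  have hHm : ∀ I : ℕ, Measurable (fun ω => H (truncSeq Y n I ω)) := fun I => hH.comp (htm I)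
  have hsupp : ∀ (I : ℕ) (ω : Ω), (Function.support (truncSeq Y n I ω)).Finite := by
    intro I ω
    apply (Finset.finite_toSet (Finset.Icc (-(I:ℤ)) I)).subset
    intro j hj
    simp only [Function.mem_support, truncSeq] at hj
    by_contra hc
    simp only [Finset.coe_Icc, Set.mem_Icc, not_and_or, not_le] at hc
    have habs : |j| = (j.natAbs:ℤ) := Int.abs_eq_natAbs j
    have : ¬ |j| ≤ (I:ℤ) := by omega
    simp [this] at hj
  -- pointwise bound for the difference of truncations
  have hptw : ∀ I : ℕ, r ≤ I → ∀ ω,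
      |H (truncSeq Y n I ω) - H (truncSeq Y n r ω)|
        ≤ ∑ j ∈ (Finset.Icc (-(I:ℤ)) I) \ (Finset.Icc (-(r:ℤ)) r), bw j * |Y (n - j) ω| := by
    intro I hrI ω
    set S := (Finset.Icc (-(I:ℤ)) I) \ (Finset.Icc (-(r:ℤ)) r) with hS
    have := hsd S (truncSeq Y n I ω) (truncSeq Y n r ω) (hsupp I ω) (hsupp r ω) ?_
    · refine this.trans (le_of_eq (Finset.sum_congr rfl fun j hj => ?_))
      simp only [hS, Finset.mem_sdiff, Finset.mem_Icc, not_and_or, not_le] at hj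
      have habs : |j| = (j.natAbs:ℤ) := Int.abs_eq_natAbs j
      have h1 : |j| ≤ (I:ℤ) := by omega
      have h2 : ¬ |j| ≤ (r:ℤ) := by omega
      simp [truncSeq, h1, h2]
    · intro j hj
      simp only [hS, Finset.mem_sdiff, Finset.mem_Icc, not_and_or, not_le, not_not] at hj
      have habs : |j| = (j.natAbs:ℤ) := Int.abs_eq_natAbs j
      by_cases h1 : |j| ≤ (r:ℤ)
      · have h2 : |j| ≤ (I:ℤ) := by omega
        simp [truncSeq, h1, h2]
      · have h2 : ¬ |j| ≤ (I:ℤ) := by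
          rcases hj with hj | hj
          · omega
          · omega
        simp [truncSeq, h1, h2]
  -- the sum of weights over S is at most T
  have hsum : ∀ I : ℕ, ∑ j ∈ (Finset.Icc (-(I:ℤ)) I) \ (Finset.Icc (-(r:ℤ)) r), bw j ≤ T := by
    intro I
    set S := (Finset.Icc (-(I:ℤ)) I) \ (Finset.Icc (-(r:ℤ)) r) with hS
    have hmemS : ∀ j ∈ S, (r:ℤ) ≤ |j| := by
      intro j hj
      simp only [hS, Finset.mem_sdiff, Finset.mem_Icc, not_and_or, not_le] at hj
      have habs : |j| = (j.natAbs:ℤ) := Int.abs_eq_natAbs j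
      omega
    rw [hT]
    have e1 : ∑ j ∈ S, bw j = ∑ j ∈ S.subtype (fun i => (r:ℤ) ≤ |i|), bw j.1 := by
      rw [Finset.sum_subtype_eq_sum_filter]
      congr 1
      exact (Finset.filter_true_of_mem hmemS).symm
    rw [e1]
    exact sum_le_hasSum _ (fun i _ => hbw _) ((hL.subtype _).hasSum)
  -- L¹ bound for difference of truncations
  have hL1 : ∀ I : ℕ, r ≤ I →
      eLpNorm (fun ω => H (truncSeq Y n I ω) - H (truncSeq Y n r ω)) 1 μ
        ≤ ENNReal.ofReal (T * M) := by
    intro I hrI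
    set S := (Finset.Icc (-(I:ℤ)) I) \ (Finset.Icc (-(r:ℤ)) r) with hS
    set g := fun ω => ∑ j ∈ S, bw j * |Y (n - j) ω| with hg
    have hgint : Integrable g μ :=
      integrable_finset_sum _ fun j _ => ((hYint (n - j)).abs.const_mul _)
    have hgval : ∫ ω, g ω ∂μ ≤ T * M := by
      rw [hg, integral_finset_sum _ fun j _ => ((hYint (n - j)).abs.const_mul _)]
      have : ∀ j ∈ S, ∫ ω, bw j * |Y (n - j) ω| ∂μ = bw j * M := by
        intro j _
        rw [integral_const_mul, hYabs (n - j)]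
      rw [Finset.sum_congr rfl this, ← Finset.sum_mul]
      exact mul_le_mul_of_nonneg_right (hsum I) hM0
    calc eLpNorm (fun ω => H (truncSeq Y n I ω) - H (truncSeq Y n r ω)) 1 μ
        = ∫⁻ ω, ‖H (truncSeq Y n I ω) - H (truncSeq Y n r ω)‖₊ ∂μ :=
          eLpNorm_one_eq_lintegral_enorm
      _ ≤ ∫⁻ ω, ENNReal.ofReal (g ω) ∂μ := by
          refine lintegral_mono fun ω => ?_
          rw [← ENNReal.ofReal_coe_nnreal, coe_nnnorm, Real.norm_eq_abs]
          exact ENNReal.ofReal_le_ofReal (hptw I hrI ω)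
      _ = ENNReal.ofReal (∫ ω, g ω ∂μ) := by
          rw [ofReal_integral_eq_lintegral_ofReal hgint
            (ae_of_all _ fun ω => Finset.sum_nonneg fun j _ =>
              mul_nonneg (hbw j) (abs_nonneg _))]
      _ ≤ ENNReal.ofReal (T * M) := ENNReal.ofReal_le_ofReal hgval
  -- pass to the limit
  have hkey : eLpNorm (fun ω => X n ω - H (truncSeq Y n r ω)) 1 μ ≤ ENNReal.ofReal (T * M) := by
    have hb : ∀ I : ℕ, r ≤ I →
        eLpNorm (fun ω => X n ω - H (truncSeq Y n r ω)) 1 μ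
          ≤ eLpNorm (fun ω => H (truncSeq Y n I ω) - X n ω) 1 μ + ENNReal.ofReal (T * M) := by
      intro I hrI
      have hdec : (fun ω => X n ω - H (truncSeq Y n r ω))
          = (fun ω => (X n ω - H (truncSeq Y n I ω)) + (H (truncSeq Y n I ω) - H (truncSeq Y n r ω))) := by
        funext ω; ring
      rw [hdec]
      refine (eLpNorm_add_le ((hXm n).aestronglyMeasurable.sub
        (hHm I).aestronglyMeasurable) ((hHm I).aestronglyMeasurable.sub
        (hHm r).aestronglyMeasurable) le_rfl).trans ?_
      gcongr
      · refine le_of_eq ?_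
        have h := eLpNorm_sub_comm (X n) (fun ω => H (truncSeq Y n I ω)) 1 μ
        simpa [Pi.sub_def] using h
      · exact hL1 I hrI
    have hlim : Tendsto (fun I : ℕ => eLpNorm (fun ω => H (truncSeq Y n I ω) - X n ω) 1 μ
        + ENNReal.ofReal (T * M)) atTop (nhds (ENNReal.ofReal (T * M))) := by
      have := (hXlim n).add (tendsto_const_nhds (x := ENNReal.ofReal (T * M)))
      simpa using this
    refine ge_of_tendsto hlim ?_
    filter_upwards [eventually_ge_atTop r] with I hI
    exact hb I hI
  have haesm : AEStronglyMeasurable (fun ω => X n ω - H (truncSeq Y n r ω)) μ :=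
    (hXm n).aestronglyMeasurable.sub (hHm r).aestronglyMeasurable
  have hint : Integrable (fun ω => X n ω - H (truncSeq Y n r ω)) μ := by
    rw [← memLp_one_iff_integrable]
    exact ⟨haesm, lt_of_le_of_lt hkey ENNReal.ofReal_lt_top⟩
  refine ⟨hint, ?_⟩
  have e1 : ∫ ω, |X n ω - H (truncSeq Y n r ω)| ∂μ
      = (eLpNorm (fun ω => X n ω - H (truncSeq Y n r ω)) 1 μ).toReal := by
    rw [eLpNorm_one_eq_lintegral_enorm]
    simpa [Real.norm_eq_abs] using integral_norm_eq_lintegral_enorm haesm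
  rw [e1]
  exact ENNReal.toReal_le_of_le_ofReal (mul_nonneg hT0 hM0) hkey

lemma window (H : (ℤ → ℝ) → ℝ) (bw : ℤ → ℝ) (hbw : ∀ s, 0 ≤ bw s) (hL : Summable bw)
    (hsd : ∀ (S : Finset ℤ) (x y : ℤ → ℝ), (Function.support x).Finite →
      (Function.support y).Finite → (∀ j ∉ S, x j = y j) →
      |H x - H y| ≤ ∑ j ∈ S, bw j * |x j - y j|)
    {u r : ℕ} (s : Fin u → ℤ) (f : (Fin u → ℝ) → ℝ) (a : ℝ)
    (hfb : ∀ x, |f x| ≤ 1) (hfl : LipBound f a) (ha : 0 ≤ a) :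
    ∃ (s' : Fin ((2*r+1)*u) → ℤ) (F : (Fin ((2*r+1)*u) → ℝ) → ℝ),
      Monotone s' ∧ (∀ p, ∃ i, s i - r ≤ s' p ∧ s' p ≤ s i + r) ∧
      (∀ x, |F x| ≤ 1) ∧ LipBound F (a * ∑' j, bw j) ∧
      (∀ y : ℤ → ℝ, F (fun p => y (s' p))
        = f (fun i => H (fun j => if |j| ≤ (r:ℤ) then y (s i - j) else 0))) := by
  classical
  set L := ∑' j, bw j with hLdef
  have hL0 : 0 ≤ L := tsum_nonneg fun j => hbw j
  set N := (2*r+1)*u with hN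
  let enc : Fin (2*r+1) × Fin u → Fin N := finProdFinEquiv
  let dec : Fin N → Fin (2*r+1) × Fin u := finProdFinEquiv.symm
  let q : Fin N → ℤ := fun p => s (dec p).2 - r + (((dec p).1 : ℕ) : ℤ)
  let σ := Tuple.sort q
  -- the assembled inner sequence
  let A : Fin u → (Fin N → ℝ) → ℤ → ℝ := fun i x j =>
    if h : j.natAbs ≤ r then x (σ.symm (enc (⟨((r:ℤ) - j).toNat, by omega⟩, i))) else 0
  let F : (Fin N → ℝ) → ℝ := fun x => f (fun i => H (A i x))
  have hq_enc : ∀ (c : Fin (2*r+1)) (i : Fin u), q (enc (c, i)) = s i - r + (c : ℤ) := by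
    intro c i
    simp only [q, dec, enc, Equiv.symm_apply_apply]
  have hAeval : ∀ (x : Fin N → ℝ) (i : Fin u) (c : Fin (2*r+1)),
      A i x ((r:ℤ) - (c:ℤ)) = x (σ.symm (enc (c, i))) := by
    intro x i c
    have hc : ((r:ℤ) - (c:ℤ)).natAbs ≤ r := by have := c.isLt; omega
    have hfin : (⟨((r:ℤ) - ((r:ℤ) - (c:ℤ))).toNat, by omega⟩ : Fin (2*r+1)) = c := by
      apply Fin.ext
      show ((r:ℤ) - ((r:ℤ) - (c:ℤ))).toNat = (c:ℕ)
      have := c.isLt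
      omega
    simp only [A, dif_pos hc]
    exact congrArg (fun z => x (σ.symm (enc (z, i)))) hfin
  have hsupp : ∀ (i : Fin u) (x : Fin N → ℝ), (Function.support (A i x)).Finite := by
    intro i x
    apply (Finset.finite_toSet (Finset.Icc (-(r:ℤ)) r)).subset
    intro j hj
    simp only [Function.mem_support, A] at hj
    by_contra hc
    simp only [Finset.coe_Icc, Set.mem_Icc, not_and_or, not_le] at hc
    have : ¬ j.natAbs ≤ r := by omega
    simp [this] at hj
  refine ⟨q ∘ σ, F, Tuple.monotone_sort q, ?_, fun x => hfb _, ?_, ?_⟩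
  · -- range
    intro p
    refine ⟨(dec (σ p)).2, ?_, ?_⟩ <;>
    · have h1 : ((dec (σ p)).1 : ℕ) < 2*r+1 := (dec (σ p)).1.isLt
      simp only [Function.comp_apply, q]
      omega
  · -- Lipschitz
    intro x y
    set S : Finset ℤ := Finset.image (fun c : Fin (2*r+1) => (r:ℤ) - (c:ℤ)) Finset.univ with hS
    have step1 : |F x - F y| ≤ a * ∑ i, |H (A i x) - H (A i y)| := hfl _ _
    have step2 : ∀ i : Fin u, |H (A i x) - H (A i y)|
        ≤ ∑ c : Fin (2*r+1), L * |x (σ.symm (enc (c, i))) - y (σ.symm (enc (c, i)))| := by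
      intro i
      have hdiff : ∀ j ∉ S, A i x j = A i y j := by
        intro j hj
        have hna : ¬ j.natAbs ≤ r := by
          intro hna
          apply hj
          rw [hS, Finset.mem_image]
          exact ⟨⟨((r:ℤ) - j).toNat, by omega⟩, Finset.mem_univ _, by simp; omega⟩
        simp only [A, dif_neg hna]
      refine (hsd S (A i x) (A i y) (hsupp i x) (hsupp i y) hdiff).trans ?_
      rw [hS, Finset.sum_image (by
        intro c1 _ c2 _ h
        apply Fin.ext
        have := c1.isLt; have := c2.isLt
        have h' : ((r:ℤ) - (c1:ℤ)) = (r:ℤ) - (c2:ℤ) := h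
        omega)]
      refine Finset.sum_le_sum fun c _ => ?_
      rw [hAeval x i c, hAeval y i c]
      exact mul_le_mul_of_nonneg_right (hL.le_tsum _ fun j _ => hbw j) (abs_nonneg _)
    have step3 : ∑ i : Fin u, ∑ c : Fin (2*r+1),
        L * |x (σ.symm (enc (c, i))) - y (σ.symm (enc (c, i)))|
        = L * ∑ p, |x p - y p| := by
      have e1 : ∀ i : Fin u, ∑ c : Fin (2*r+1),
          L * |x (σ.symm (enc (c, i))) - y (σ.symm (enc (c, i)))|
          = L * ∑ c : Fin (2*r+1), |x (σ.symm (enc (c, i))) - y (σ.symm (enc (c, i)))| :=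
        fun i => (Finset.mul_sum _ _ _).symm
      rw [Finset.sum_congr rfl (fun i _ => e1 i), ← Finset.mul_sum]
      congr 1
      set E : Fin (2*r+1) × Fin u → Fin N := fun z => σ.symm (enc z) with hE
      set g : Fin N → ℝ := fun p => |x p - y p| with hg
      have h1 : (∑ z : Fin (2*r+1) × Fin u, g (E z)) = ∑ c, ∑ i, g (E (c, i)) :=
        Fintype.sum_prod_type _
      have h2 : (∑ z : Fin (2*r+1) × Fin u, g (E z)) = ∑ p, g p :=
        Fintype.sum_bijective E ((finProdFinEquiv.trans σ.symm).bijective) _ _ (fun z => rfl)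
      calc ∑ i : Fin u, ∑ c : Fin (2*r+1), g (E (c, i))
          = ∑ c : Fin (2*r+1), ∑ i : Fin u, g (E (c, i)) := Finset.sum_comm
        _ = ∑ p, g p := h1.symm.trans h2
    calc |F x - F y| ≤ a * ∑ i, |H (A i x) - H (A i y)| := step1
      _ ≤ a * ∑ i : Fin u, ∑ c : Fin (2*r+1),
            L * |x (σ.symm (enc (c, i))) - y (σ.symm (enc (c, i)))| :=
          mul_le_mul_of_nonneg_left (Finset.sum_le_sum fun i _ => step2 i) ha
      _ = a * (L * ∑ p, |x p - y p|) := by rw [step3]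
      _ = (a * L) * ∑ p, |x p - y p| := by ring
  · -- evaluation
    intro y
    simp only [F]
    congr 1
    funext i
    congr 1
    funext j
    by_cases hc : j.natAbs ≤ r
    · have hc' : |j| ≤ (r:ℤ) := by have := Int.abs_eq_natAbs j; omega
      rw [if_pos hc']
      simp only [A, dif_pos hc, Function.comp_apply]
      have : q (σ (σ.symm (enc (⟨((r:ℤ) - j).toNat, by omega⟩, i)))) = s i - j := by
        rw [Equiv.apply_symm_apply, hq_enc]
        show s i - (r:ℤ) + ((((r:ℤ) - j).toNat : ℕ) : ℤ) = s i - j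
        omega
      rw [this]
    · have hc' : ¬ |j| ≤ (r:ℤ) := by have := Int.abs_eq_natAbs j; omega
      rw [if_neg hc']
      simp only [A, dif_neg hc]

end AuxLemmas

theorem bernoulli_shift_eta_heredity_lipschitz
    {Ω : Type*} [MeasurableSpace Ω] (μ : Measure Ω) [IsProbabilityMeasure μ]
    (Y : ℤ → Ω → ℝ) (hmeas : ∀ t, Measurable (Y t))
    (hstat : IsStrictlyStationaryProc μ Y)
    (H : (ℤ → ℝ) → ℝ) (hH : Measurable H)
    (hmom : Integrable (Y 0) μ)
    (bw : ℤ → ℝ) (hbw : ∀ s, 0 ≤ bw s)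
    (hstar : StarCondition H 0 bw)
    (hL : Summable bw)
    (ηY : ℕ → ℝ) (hdep : WeaklyDependent μ Y etaPsi ηY)
    (X : ℤ → Ω → ℝ) (hX : IsBernoulliShift μ Y H 1 X) :
    ∃ ε : ℕ → ℝ, WeaklyDependent μ X etaPsi ε ∧
      ∀ k r : ℕ, 2 * r ≤ k →
        ε k ≤ 2 * (∑' i : {i : ℤ // (r : ℤ) ≤ |i|}, bw i) * (∫ ω, |Y 0 ω| ∂μ)
          + (2 * (r : ℝ) + 1) * (∑' j : ℤ, bw j) * ηY (k - 2 * r) := by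
  classical
  obtain ⟨ηY0, ηanti, ηlim, hcov⟩ := hdep
  set M := ∫ ω, |Y 0 ω| ∂μ with hM
  have hM0 : 0 ≤ M := integral_nonneg fun ω => abs_nonneg _
  set Lw := ∑' j : ℤ, bw j with hLw
  have hLw0 : 0 ≤ Lw := tsum_nonneg fun j => hbw j
  set T : ℕ → ℝ := fun r => ∑' i : {i : ℤ // (r : ℤ) ≤ |i|}, bw i with hTdef
  have hT0 : ∀ r, 0 ≤ T r := fun r => tsum_nonneg fun i => hbw _
  set B : ℕ → ℕ → ℝ := fun k r => 2 * T r * M + (2*(r:ℝ)+1) * Lw * ηY (k - 2*r) with hBdef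
  have hB0 : ∀ k r, 0 ≤ B k r := fun k r =>
    add_nonneg (mul_nonneg (mul_nonneg two_pos.le (hT0 r)) hM0)
      (mul_nonneg (mul_nonneg (by positivity) hLw0) (ηY0 _))
  set Eset : ℕ → Set ℝ := fun k => {x : ℝ | ∃ r : ℕ, 2*r ≤ k ∧ x = B k r} with hEset
  set E : ℕ → ℝ := fun k => sInf (Eset k) with hE
  have hne : ∀ k, (Eset k).Nonempty := fun k => ⟨B k 0, 0, by omega, rfl⟩
  have hlb : ∀ k, ∀ x ∈ Eset k, (0:ℝ) ≤ x := by
    rintro k x ⟨r, _, rfl⟩; exact hB0 k r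
  have hbdd : ∀ k, BddBelow (Eset k) := fun k => ⟨0, fun x hx => hlb k x hx⟩
  have hE0 : ∀ k, 0 ≤ E k := fun k => Real.sInf_nonneg (hlb k)
  have hEle : ∀ k r, 2*r ≤ k → E k ≤ B k r := fun k r hr => csInf_le (hbdd k) ⟨r, hr, rfl⟩
  have hEanti : Antitone E := by
    intro k1 k2 h12
    refine le_csInf (hne k1) ?_
    rintro x ⟨r, hr, rfl⟩
    refine (hEle k2 r (hr.trans h12)).trans ?_
    have h1 : ηY (k2 - 2*r) ≤ ηY (k1 - 2*r) := ηanti (by omega)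
    have h2 : (2*(r:ℝ)+1) * Lw * ηY (k2-2*r) ≤ (2*(r:ℝ)+1) * Lw * ηY (k1-2*r) :=
      mul_le_mul_of_nonneg_left h1 (mul_nonneg (by positivity) hLw0)
    simp only [hBdef]
    linarith
  have hElim : Tendsto E atTop (nhds 0) := by
    rw [Metric.tendsto_atTop]
    intro δ hδ
    have hTt := tail_tendsto bw hbw hL
    have h1 : Tendsto (fun r => 2 * T r * M) atTop (nhds 0) := by
      have := (hTt.const_mul (2:ℝ)).mul_const M
      simpa using this
    obtain ⟨r0, hr0⟩ := Metric.tendsto_atTop.1 h1 (δ/2) (by linarith)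
    have hr0' : 2 * T r0 * M < δ/2 := by
      have h := hr0 r0 le_rfl
      rwa [Real.dist_eq, sub_zero,
        abs_of_nonneg (mul_nonneg (mul_nonneg two_pos.le (hT0 r0)) hM0)] at h
    set c := (2*(r0:ℝ)+1) * Lw + 1 with hc
    have hc0 : (0:ℝ) < c := by positivity
    obtain ⟨K, hK⟩ := Metric.tendsto_atTop.1 ηlim (δ/(2*c)) (by positivity)
    refine ⟨2*r0 + K, fun k hk => ?_⟩
    rw [Real.dist_eq, sub_zero, abs_of_nonneg (hE0 k)]
    have h3 : ηY (k - 2*r0) < δ/(2*c) := by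
      have := hK (k - 2*r0) (by omega)
      rwa [Real.dist_eq, sub_zero, abs_of_nonneg (ηY0 _)] at this
    have h4 : (2*(r0:ℝ)+1) * Lw * ηY (k-2*r0) < δ/2 := by
      calc (2*(r0:ℝ)+1) * Lw * ηY (k-2*r0) ≤ c * ηY (k-2*r0) :=
            mul_le_mul_of_nonneg_right (by simp only [hc]; linarith [ηY0 (k-2*r0)]) (ηY0 _)
        _ < c * (δ/(2*c)) := mul_lt_mul_of_pos_left h3 hc0
        _ = δ/2 := by field_simp
    have h2 : E k ≤ B k r0 := hEle k r0 (by omega)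
    have : B k r0 < δ := by simp only [hBdef]; linarith
    linarith
  -- derived facts about Y
  have hYint : ∀ τ : ℤ, Integrable (Y τ) μ := fun τ =>
    (transfer_int (Y τ) (Y 0) (hmeas τ) (hmeas 0) (mapY_eq Y hmeas hstat τ) hmom).1
  have hYabs : ∀ τ : ℤ, ∫ ω, |Y τ ω| ∂μ = M := fun τ =>
    (transfer_int (Y τ) (Y 0) (hmeas τ) (hmeas 0) (mapY_eq Y hmeas hstat τ) hmom).2
  have hsd := star_diff hbw hstar
  have hk1 := fun (n : ℤ) (r : ℕ) => key1 Y hmeas H hH bw hbw hL hsd hYint hYabs X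
    (fun n => (hX n).1) (fun n => (hX n).2) n r
  refine ⟨E, ⟨hE0, hEanti, hElim, ?_⟩, fun k r hr => hEle k r hr⟩
  intro u v hu hv k s t hms hmt hgap f g a b hfb hgb hfl hgl ha hb
  -- main estimate for each admissible r
  have main : ∀ r : ℕ, 2*r ≤ k →
      |cov μ (fun ω => f (fun i => X (s i) ω)) (fun ω => g (fun i => X (t i) ω))|
        ≤ ((u:ℝ) * a + (v:ℝ) * b) * B k r := by
    intro r hr
    obtain ⟨s', F, hs'm, hs'r, hFb, hFl, hFe⟩ :=
      window H bw hbw hL hsd (r := r) s f a hfb hfl ha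
    obtain ⟨t', G, ht'm, ht'r, hGb, hGl, hGe⟩ :=
      window H bw hbw hL hsd (r := r) t g b hgb hgl hb
    have hgap' : ∀ p q', s' p + ((k - 2*r : ℕ) : ℤ) ≤ t' q' := by
      intro p q'
      obtain ⟨i, _, h2⟩ := hs'r p
      obtain ⟨j, h3, _⟩ := ht'r q'
      have h4 := hgap i j
      omega
    have happ := hcov ((2*r+1)*u) ((2*r+1)*v) (Nat.mul_pos (by omega) hu)
      (Nat.mul_pos (by omega) hv) (k - 2*r) s' t' hs'm ht'm hgap' F G (a*Lw) (b*Lw)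
      hFb hGb hFl hGl (mul_nonneg ha hLw0) (mul_nonneg hb hLw0)
    have heF : (fun ω => F (fun p => Y (s' p) ω))
        = fun ω => f (fun i => H (truncSeq Y (s i) r ω)) :=
      funext fun ω => hFe (fun τ => Y τ ω)
    have heG : (fun ω => G (fun p => Y (t' p) ω))
        = fun ω => g (fun i => H (truncSeq Y (t i) r ω)) :=
      funext fun ω => hGe (fun τ => Y τ ω)
    rw [heF, heG] at happ
    set fX := fun ω => f (fun i => X (s i) ω) with hfX
    set gX := fun ω => g (fun i => X (t i) ω) with hgX
    set fr := fun ω => f (fun i => H (truncSeq Y (s i) r ω)) with hfr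
    set gr := fun ω => g (fun i => H (truncSeq Y (t i) r ω)) with hgr
    have hfc := lipBound_continuous hfl ha
    have hgc := lipBound_continuous hgl hb
    have htm : ∀ n : ℤ, Measurable (fun ω => truncSeq Y n r ω) := by
      intro n
      apply measurable_pi_lambda
      intro j
      by_cases h : |j| ≤ (r:ℤ) <;> simp only [truncSeq, h, if_true, if_false]
      · exact hmeas _
      · exact measurable_const
    have hfrm : AEStronglyMeasurable fr μ :=
      (hfc.measurable.comp (measurable_pi_lambda _ fun i =>
        hH.comp (htm (s i)))).aestronglyMeasurable
    have hgrm : AEStronglyMeasurable gr μ :=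
      (hgc.measurable.comp (measurable_pi_lambda _ fun i =>
        hH.comp (htm (t i)))).aestronglyMeasurable
    have hfXm : AEStronglyMeasurable fX μ :=
      hfc.comp_aestronglyMeasurable (aesm_pi _ fun i => (hX (s i)).1.aestronglyMeasurable)
    have hgXm : AEStronglyMeasurable gX μ :=
      hgc.comp_aestronglyMeasurable (aesm_pi _ fun i => (hX (t i)).1.aestronglyMeasurable)
    have hfapprox : ∫ ω, |fX ω - fr ω| ∂μ ≤ a * ((u:ℝ) * (T r * M)) := by
      have hptw : ∀ ω, |fX ω - fr ω|
          ≤ a * ∑ i, |X (s i) ω - H (truncSeq Y (s i) r ω)| := fun ω => hfl _ _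
      have hRint : Integrable
          (fun ω => a * ∑ i, |X (s i) ω - H (truncSeq Y (s i) r ω)|) μ :=
        (integrable_finset_sum _ fun i _ => (hk1 (s i) r).1.abs).const_mul a
      have hLint : Integrable (fun ω => |fX ω - fr ω|) μ := by
        have habsm : AEStronglyMeasurable (fun ω => |fX ω - fr ω|) μ := by
          simpa [Real.norm_eq_abs] using (hfXm.sub hfrm).norm
        refine Integrable.mono' hRint habsm (ae_of_all _ fun ω => ?_)
        rw [Real.norm_eq_abs, abs_abs]
        exact hptw ω
      refine (integral_mono hLint hRint hptw).trans ?_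
      rw [integral_const_mul, integral_finset_sum _ fun i _ => (hk1 (s i) r).1.abs]
      refine mul_le_mul_of_nonneg_left ?_ ha
      calc ∑ i : Fin u, ∫ ω, |X (s i) ω - H (truncSeq Y (s i) r ω)| ∂μ
          ≤ ∑ _i : Fin u, T r * M := Finset.sum_le_sum fun i _ => (hk1 (s i) r).2
        _ = (u:ℝ) * (T r * M) := by
            rw [Finset.sum_const, Finset.card_univ, Fintype.card_fin, nsmul_eq_mul]
    have hgapprox : ∫ ω, |gX ω - gr ω| ∂μ ≤ b * ((v:ℝ) * (T r * M)) := by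
      have hptw : ∀ ω, |gX ω - gr ω|
          ≤ b * ∑ i, |X (t i) ω - H (truncSeq Y (t i) r ω)| := fun ω => hgl _ _
      have hRint : Integrable
          (fun ω => b * ∑ i, |X (t i) ω - H (truncSeq Y (t i) r ω)|) μ :=
        (integrable_finset_sum _ fun i _ => (hk1 (t i) r).1.abs).const_mul b
      have hLint : Integrable (fun ω => |gX ω - gr ω|) μ := by
        have habsm : AEStronglyMeasurable (fun ω => |gX ω - gr ω|) μ := by
          simpa [Real.norm_eq_abs] using (hgXm.sub hgrm).norm
        refine Integrable.mono' hRint habsm (ae_of_all _ fun ω => ?_)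
        rw [Real.norm_eq_abs, abs_abs]
        exact hptw ω
      refine (integral_mono hLint hRint hptw).trans ?_
      rw [integral_const_mul, integral_finset_sum _ fun i _ => (hk1 (t i) r).1.abs]
      refine mul_le_mul_of_nonneg_left ?_ hb
      calc ∑ i : Fin v, ∫ ω, |X (t i) ω - H (truncSeq Y (t i) r ω)| ∂μ
          ≤ ∑ _i : Fin v, T r * M := Finset.sum_le_sum fun i _ => (hk1 (t i) r).2
        _ = (v:ℝ) * (T r * M) := by
            rw [Finset.sum_const, Finset.card_univ, Fintype.card_fin, nsmul_eq_mul]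
    have h1 : |cov μ fX gX - cov μ fr gX| ≤ 2 * ∫ ω, |fX ω - fr ω| ∂μ :=
      abs_cov_sub_le hfXm hfrm hgXm (fun ω => hfb _) (fun ω => hfb _) (fun ω => hgb _)
    have h2 : |cov μ fr gX - cov μ fr gr| ≤ 2 * ∫ ω, |gX ω - gr ω| ∂μ := by
      rw [cov_comm_s12 fr gX, cov_comm_s12 fr gr]
      exact abs_cov_sub_le hgXm hgrm hfrm (fun ω => hgb _) (fun ω => hgb _) (fun ω => hfb _)
    have h3 : |cov μ fr gr| ≤ etaPsi ((2*r+1)*u) ((2*r+1)*v) (a*Lw) (b*Lw) * ηY (k-2*r) := happ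
    have habs : |cov μ fX gX| ≤ |cov μ fX gX - cov μ fr gX|
        + |cov μ fr gX - cov μ fr gr| + |cov μ fr gr| := by
      have e : cov μ fX gX = (cov μ fX gX - cov μ fr gX)
          + (cov μ fr gX - cov μ fr gr) + cov μ fr gr := by ring
      calc |cov μ fX gX| = |(cov μ fX gX - cov μ fr gX)
            + (cov μ fr gX - cov μ fr gr) + cov μ fr gr| := by rw [← e]
        _ ≤ |(cov μ fX gX - cov μ fr gX) + (cov μ fr gX - cov μ fr gr)| + |cov μ fr gr| :=
            abs_add_le _ _
        _ ≤ |cov μ fX gX - cov μ fr gX| + |cov μ fr gX - cov μ fr gr| + |cov μ fr gr| := by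
            have := abs_add_le (cov μ fX gX - cov μ fr gX) (cov μ fr gX - cov μ fr gr)
            linarith
    have hpsi : etaPsi ((2*r+1)*u) ((2*r+1)*v) (a*Lw) (b*Lw) * ηY (k-2*r)
        = ((2*(r:ℝ)+1) * (u:ℝ) * (a*Lw) + (2*(r:ℝ)+1) * (v:ℝ) * (b*Lw)) * ηY (k-2*r) := by
      simp only [etaPsi]
      push_cast
      ring
    simp only [hBdef]
    calc |cov μ fX gX| ≤ |cov μ fX gX - cov μ fr gX|
          + |cov μ fr gX - cov μ fr gr| + |cov μ fr gr| := habs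
      _ ≤ 2 * (a * ((u:ℝ) * (T r * M))) + 2 * (b * ((v:ℝ) * (T r * M)))
          + ((2*(r:ℝ)+1) * (u:ℝ) * (a*Lw) + (2*(r:ℝ)+1) * (v:ℝ) * (b*Lw)) * ηY (k-2*r) := by
        rw [hpsi] at h3
        have e1 := h1.trans (by linarith [hfapprox] : 2 * ∫ ω, |fX ω - fr ω| ∂μ
          ≤ 2 * (a * ((u:ℝ) * (T r * M))))
        have e2 := h2.trans (by linarith [hgapprox] : 2 * ∫ ω, |gX ω - gr ω| ∂μ
          ≤ 2 * (b * ((v:ℝ) * (T r * M))))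
        linarith
      _ = ((u:ℝ) * a + (v:ℝ) * b) * (2 * T r * M + (2*(r:ℝ)+1) * Lw * ηY (k - 2*r)) := by
        ring
  -- conclude
  have hψ0 : (0:ℝ) ≤ (u:ℝ) * a + (v:ℝ) * b :=
    add_nonneg (mul_nonneg (Nat.cast_nonneg u) ha) (mul_nonneg (Nat.cast_nonneg v) hb)
  by_cases hψ : ((u:ℝ) * a + (v:ℝ) * b) = 0
  · have hu' : (0:ℝ) < u := by exact_mod_cast hu
    have ha0 : a = 0 := by
      have h1 : (0:ℝ) ≤ (u:ℝ) * a := mul_nonneg (Nat.cast_nonneg u) ha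
      have h2 : (0:ℝ) ≤ (v:ℝ) * b := mul_nonneg (Nat.cast_nonneg v) hb
      have h3 : (u:ℝ) * a = 0 := by linarith
      rcases mul_eq_zero.1 h3 with h | h
      · exact absurd h (by positivity)
      · exact h
    have hconst : ∀ x, f x = f (fun _ => 0) := by
      intro x
      have h := hfl x (fun _ => 0)
      rw [ha0, zero_mul] at h
      have := abs_nonneg (f x - f (fun _ => 0))
      have : f x - f (fun _ => 0) = 0 := abs_eq_zero.1 (le_antisymm h this)
      linarith
    have hzero : cov μ (fun ω => f (fun i => X (s i) ω)) (fun ω => g (fun i => X (t i) ω)) = 0 := by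
      have e : (fun ω => f (fun i => X (s i) ω)) = fun _ => f (fun _ => 0) :=
        funext fun ω => hconst _
      rw [e]
      unfold cov
      rw [integral_const_mul]
      simp [integral_const]
    rw [hzero]
    simp only [etaPsi, abs_zero]
    rw [hψ, zero_mul]
  · have hψpos : (0:ℝ) < (u:ℝ) * a + (v:ℝ) * b := lt_of_le_of_ne hψ0 (Ne.symm hψ)
    have hEge : |cov μ (fun ω => f (fun i => X (s i) ω)) (fun ω => g (fun i => X (t i) ω))|
        / ((u:ℝ) * a + (v:ℝ) * b) ≤ E k := by
      refine le_csInf (hne k) ?_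
      rintro x ⟨r, hrk, rfl⟩
      rw [div_le_iff₀ hψpos]
      calc |cov μ (fun ω => f (fun i => X (s i) ω)) (fun ω => g (fun i => X (t i) ω))|
          ≤ ((u:ℝ) * a + (v:ℝ) * b) * B k r := main r hrk
        _ = B k r * ((u:ℝ) * a + (v:ℝ) * b) := mul_comm _ _
    calc |cov μ (fun ω => f (fun i => X (s i) ω)) (fun ω => g (fun i => X (t i) ω))|
        = (|cov μ (fun ω => f (fun i => X (s i) ω)) (fun ω => g (fun i => X (t i) ω))|
          / ((u:ℝ) * a + (v:ℝ) * b)) * ((u:ℝ) * a + (v:ℝ) * b) :=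
          (div_mul_cancel₀ _ hψ).symm
      _ ≤ E k * ((u:ℝ) * a + (v:ℝ) * b) := mul_le_mul_of_nonneg_right hEge hψ0
      _ = etaPsi u v a b * E k := by simp only [etaPsi]; ring
end

section
/- (Existence for non-Lipschitz Bernoulli shifts.) Let (Y_t)_{t∈ℤ} be a strictly stationary real-valued process and H: ℝ^(ℤ) → ℝ satisfy condition (★) with exponent ℓ > 0 and nonnegative weights (b_j)_{j∈ℤ} with Σ_{j∈ℤ} |j| b_j < ∞. Assume E|Y_0|^{m'} < ∞ for real numbers m, m' with m ≥ 1 and m' ≥ (ℓ+1)m. Then for each n the limit X_n = lim_{I→∞} H((Y_{n−j} 1_{|j|≤I})_{j∈ℤ}) exists in L^m and the process (X_n)_{n∈ℤ} is strictly stationary with finite moments of order m. -/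
open MeasureTheory Filter

open Asymptotics

section Aux
variable {Ω : Type*} [MeasurableSpace Ω]

lemma measurable_truncSeq (Y : ℤ → Ω → ℝ) (hmeas : ∀ t, Measurable (Y t)) (n : ℤ) (I : ℕ) :
    Measurable (fun ω => truncSeq Y n I ω) := by
  apply measurable_pi_lambda
  intro j
  unfold truncSeq
  by_cases h : |j| ≤ (I : ℤ)
  · simpa [h] using hmeas (n - j)
  · simpa [h] using measurable_const

omit [MeasurableSpace Ω] in
lemma truncSeq_support_finite (Y : ℤ → Ω → ℝ) (n : ℤ) (I : ℕ) (ω : Ω) :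
    (Function.support (truncSeq Y n I ω)).Finite := by
  apply Set.Finite.subset (Set.finite_Icc (-(I : ℤ)) I)
  intro j hj
  simp only [Function.mem_support, truncSeq] at hj
  by_cases h : |j| ≤ (I : ℤ)
  · rcases abs_le.1 h with ⟨h1, h2⟩
    exact Set.mem_Icc.2 ⟨h1, h2⟩
  · simp [h] at hj

end Aux
section Aux2
variable {Ω : Type*}

/-- local max bound -/
noncomputable def KK (Y : ℤ → Ω → ℝ) (n : ℤ) (I : ℕ) (ω : Ω) : ℝ :=
  max 1 ((Finset.Icc (-(I+1 : ℤ)) (I+1)).sup' ⟨0, by simp; omega⟩ (fun j => |Y (n - j) ω|))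

lemma one_le_KK (Y : ℤ → Ω → ℝ) (n : ℤ) (I : ℕ) (ω : Ω) : 1 ≤ KK Y n I ω := le_max_left _ _

lemma KK_pos (Y : ℤ → Ω → ℝ) (n : ℤ) (I : ℕ) (ω : Ω) : 0 < KK Y n I ω :=
  zero_lt_one.trans_le (one_le_KK Y n I ω)

lemma abs_le_KK (Y : ℤ → Ω → ℝ) (n : ℤ) (I : ℕ) (ω : Ω) {j : ℤ} (h : |j| ≤ (I : ℤ) + 1) :
    |Y (n - j) ω| ≤ KK Y n I ω := by
  refine le_trans ?_ (le_max_right _ _)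
  refine Finset.le_sup' (fun j => |Y (n - j) ω|) ?_
  rcases abs_le.1 h with ⟨h1, h2⟩
  exact Finset.mem_Icc.2 ⟨by omega, by omega⟩

lemma star_step {H : (ℤ → ℝ) → ℝ} {ℓ : ℝ} (hℓ : 0 < ℓ) {bw : ℤ → ℝ} (hbw : ∀ s, 0 ≤ bw s)
    (hstar : StarCondition H ℓ bw) (Y : ℤ → Ω → ℝ) (n : ℤ) (I : ℕ) (ω : Ω) :
    |H (truncSeq Y n (I+1) ω) - H (truncSeq Y n I ω)| ≤
      (bw ((I : ℤ)+1) + bw (-((I : ℤ)+1))) * KK Y n I ω ^ (ℓ+1) := by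
  set K := KK Y n I ω with hK
  have hK1 : 1 ≤ K := one_le_KK Y n I ω
  have hK0 : 0 < K := KK_pos Y n I ω
  have habs1 : |(I : ℤ)+1| = (I : ℤ)+1 := abs_of_nonneg (by positivity)
  have habs2 : |(-((I : ℤ)+1))| = (I : ℤ)+1 := by rw [abs_neg, habs1]
  set x := truncSeq Y n (I+1) ω with hx
  set y := truncSeq Y n I ω with hy
  set z := Function.update x ((I : ℤ)+1) 0 with hz
  have hxval : ∀ j : ℤ, x j = if |j| ≤ (I : ℤ) + 1 then Y (n - j) ω else 0 := by
    intro j; simp [hx, truncSeq]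
  have hyval : ∀ j : ℤ, y j = if |j| ≤ (I : ℤ) then Y (n - j) ω else 0 := by
    intro j; rfl
  have hfx : (Function.support x).Finite := truncSeq_support_finite Y n (I+1) ω
  have hfz : (Function.support z).Finite := by
    refine hfx.subset ?_
    intro j hj
    simp only [Function.mem_support, hz] at hj ⊢
    by_cases hje : j = (I : ℤ)+1
    · exact absurd (by rw [hje]; simp) hj
    · rwa [Function.update_of_ne hje] at hj
  have hfy : (Function.support y).Finite := truncSeq_support_finite Y n I ω
  have hzval : ∀ j : ℤ, |z j| ≤ K := by
    intro j
    by_cases hje : j = (I : ℤ)+1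
    · simp only [hz, hje, Function.update_self, abs_zero]; linarith
    · rw [hz, Function.update_of_ne hje, hxval j]
      by_cases hj : |j| ≤ (I : ℤ) + 1
      · rw [if_pos hj]; exact abs_le_KK Y n I ω hj
      · rw [if_neg hj, abs_zero]; linarith
  have hKl : K ^ ℓ * K = K ^ (ℓ + 1) := by
    rw [Real.rpow_add_one (ne_of_gt hK0)]
  have hKl1 : (1:ℝ) ≤ K ^ ℓ := Real.one_le_rpow hK1 hℓ.le
  -- step 1 : x to z
  have h1 : |H x - H z| ≤ bw ((I : ℤ)+1) * (K ^ ℓ) * K := by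
    have hst := hstar x z hfx hfz ((I : ℤ)+1) (fun i hi => (Function.update_of_ne hi 0 x).symm)
    have hupd : Function.update x ((I : ℤ)+1) 0 = z := rfl
    rw [hupd] at hst
    refine hst.trans ?_
    have hsupz : (⨆ i, |z i|) ≤ K := ciSup_le hzval
    have hsupz0 : 0 ≤ ⨆ i, |z i| := Real.iSup_nonneg (fun i => abs_nonneg _)
    have hmax : max ((⨆ i, |z i|) ^ ℓ) 1 ≤ K ^ ℓ :=
      max_le (Real.rpow_le_rpow hsupz0 hsupz hℓ.le) hKl1
    have hxs : |x ((I : ℤ)+1) - z ((I : ℤ)+1)| ≤ K := by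
      simp only [hz, Function.update_self, sub_zero]
      rw [hxval, if_pos (le_of_eq habs1)]
      exact abs_le_KK Y n I ω (le_of_eq habs1)
    exact mul_le_mul (mul_le_mul le_rfl hmax (le_max_of_le_right zero_le_one) (hbw _)) hxs
      (abs_nonneg _) (mul_nonneg (hbw _) (by positivity))
  -- step 2 : z to y
  have hzy : ∀ i : ℤ, i ≠ -((I : ℤ)+1) → z i = y i := by
    intro i hi
    by_cases hie : i = (I : ℤ)+1
    · subst hie
      rw [hz, Function.update_self, hyval, if_neg (by rw [habs1]; omega)]
    · rw [hz, Function.update_of_ne hie, hxval, hyval]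
      by_cases hii : |i| ≤ (I : ℤ)
      · rw [if_pos (by omega), if_pos hii]
      · have : ¬ |i| ≤ (I : ℤ) + 1 := by
          rcases abs_cases i with ⟨he, _⟩ | ⟨he, _⟩ <;> omega
        rw [if_neg this, if_neg hii]
  have h2 : |H z - H y| ≤ bw (-((I : ℤ)+1)) * (K ^ ℓ) * K := by
    have hst := hstar z y hfz hfy (-((I : ℤ)+1)) hzy
    refine hst.trans ?_
    have hupdb : ∀ i : ℤ, |Function.update z (-((I : ℤ)+1)) 0 i| ≤ K := by
      intro i
      by_cases hie : i = -((I : ℤ)+1)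
      · rw [hie, Function.update_self, abs_zero]; linarith
      · rw [Function.update_of_ne hie]; exact hzval i
    have hsup2 : (⨆ i, |Function.update z (-((I : ℤ)+1)) 0 i|) ≤ K := ciSup_le hupdb
    have hsup20 : 0 ≤ ⨆ i, |Function.update z (-((I : ℤ)+1)) 0 i| :=
      Real.iSup_nonneg (fun i => abs_nonneg _)
    have hmax : max ((⨆ i, |Function.update z (-((I : ℤ)+1)) 0 i|) ^ ℓ) 1 ≤ K ^ ℓ :=
      max_le (Real.rpow_le_rpow hsup20 hsup2 hℓ.le) hKl1
    have hzs : |z (-((I : ℤ)+1)) - y (-((I : ℤ)+1))| ≤ K := by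
      have hne : -((I : ℤ)+1) ≠ (I : ℤ)+1 := by omega
      rw [hz, Function.update_of_ne hne, hxval, hyval]
      rw [if_pos (le_of_eq habs2), if_neg (by rw [habs2]; omega), sub_zero]
      exact abs_le_KK Y n I ω (le_of_eq habs2)
    exact mul_le_mul (mul_le_mul le_rfl hmax (le_max_of_le_right zero_le_one) (hbw _)) hzs
      (abs_nonneg _) (mul_nonneg (hbw _) (by positivity))
  calc |H x - H y| ≤ |H x - H z| + |H z - H y| := abs_sub_le (H x) (H z) (H y)
    _ ≤ bw ((I : ℤ)+1) * (K ^ ℓ) * K + bw (-((I : ℤ)+1)) * (K ^ ℓ) * K := add_le_add h1 h2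
    _ = (bw ((I : ℤ)+1) + bw (-((I : ℤ)+1))) * K ^ (ℓ+1) := by rw [← hKl]; ring

end Aux2
section Aux3
variable {Ω : Type*} [MeasurableSpace Ω]

lemma map_single (μ : Measure Ω) (Y : ℤ → Ω → ℝ) (hmeas : ∀ t, Measurable (Y t))
    (hstat : IsStrictlyStationary μ Y) (t : ℤ) :
    Measure.map (Y t) μ = Measure.map (Y 0) μ := by
  have h := hstat t 1 (fun _ => 0)
  have m1 : Measurable (fun ω (_ : Fin 1) => Y ((0:ℤ) + t) ω) :=
    measurable_pi_lambda _ (fun _ => hmeas _)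
  have m2 : Measurable (fun ω (_ : Fin 1) => Y (0:ℤ) ω) :=
    measurable_pi_lambda _ (fun _ => hmeas _)
  have h0 := congrArg (Measure.map (fun v : Fin 1 → ℝ => v 0)) h
  rw [Measure.map_map (measurable_pi_apply 0) m1,
      Measure.map_map (measurable_pi_apply 0) m2] at h0
  simpa [Function.comp_def] using h0

lemma lintegral_shift (μ : Measure Ω) (Y : ℤ → Ω → ℝ) (hmeas : ∀ t, Measurable (Y t))
    (hstat : IsStrictlyStationary μ Y) (t : ℤ) {f : ℝ → ENNReal} (hf : Measurable f) :
    ∫⁻ ω, f (Y t ω) ∂μ = ∫⁻ ω, f (Y 0 ω) ∂μ := by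
  rw [← lintegral_map hf (hmeas t), map_single μ Y hmeas hstat t, lintegral_map hf (hmeas 0)]

lemma moment_KK (μ : Measure Ω) [IsProbabilityMeasure μ]
    (Y : ℤ → Ω → ℝ) (hmeas : ∀ t, Measurable (Y t)) (hstat : IsStrictlyStationary μ Y)
    {m' : ℝ} (hm'0 : 0 ≤ m') (n : ℤ) (I : ℕ) :
    ∫⁻ ω, ENNReal.ofReal (KK Y n I ω ^ m') ∂μ ≤
      (2 * I + 3) * ((∫⁻ ω, ENNReal.ofReal (|Y 0 ω| ^ m') ∂μ) + 1) := by
  set C := ∫⁻ ω, ENNReal.ofReal (|Y 0 ω| ^ m') ∂μ with hC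
  have hmeasf : Measurable (fun a : ℝ => ENNReal.ofReal (|a| ^ m')) :=
    ENNReal.measurable_ofReal.comp ((measurable_abs).pow_const m' |>.mono le_rfl le_rfl)
  have hptw : ∀ ω, ENNReal.ofReal (KK Y n I ω ^ m') ≤
      ENNReal.ofReal 1 + ∑ j ∈ Finset.Icc (-(I+1 : ℤ)) (I+1), ENNReal.ofReal (|Y (n - j) ω| ^ m') := by
    intro ω
    have hsum : ENNReal.ofReal (KK Y n I ω ^ m') ≤
        ENNReal.ofReal (1 + ∑ j ∈ Finset.Icc (-(I+1 : ℤ)) (I+1), |Y (n - j) ω| ^ m') := by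
      apply ENNReal.ofReal_le_ofReal
      obtain ⟨j₀, hj₀mem, hj₀⟩ := Finset.exists_mem_eq_sup' (⟨0, by simp; omega⟩ :
        (Finset.Icc (-(I+1 : ℤ)) (I+1)).Nonempty) (fun j => |Y (n - j) ω|)
      have hsumnn : (0:ℝ) ≤ ∑ j ∈ Finset.Icc (-(I+1 : ℤ)) (I+1), |Y (n - j) ω| ^ m' :=
        Finset.sum_nonneg (fun j _ => Real.rpow_nonneg (abs_nonneg _) m')
      rcases le_total (|Y (n - j₀) ω|) 1 with hle | hle
      · have : KK Y n I ω = 1 := by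
          rw [KK, hj₀, max_eq_left hle]
        rw [this, Real.one_rpow]; linarith
      · have : KK Y n I ω = |Y (n - j₀) ω| := by
          rw [KK, hj₀, max_eq_right hle]
        rw [this]
        have hsingle : |Y (n - j₀) ω| ^ m' ≤
            ∑ j ∈ Finset.Icc (-(I+1 : ℤ)) (I+1), |Y (n - j) ω| ^ m' :=
          Finset.single_le_sum (f := fun j => |Y (n - j) ω| ^ m')
            (fun j _ => Real.rpow_nonneg (abs_nonneg _) m') hj₀mem
        linarith
    refine hsum.trans (le_of_eq ?_)
    rw [ENNReal.ofReal_add zero_le_one (Finset.sum_nonneg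
      (fun j _ => Real.rpow_nonneg (abs_nonneg _) m')),
      ENNReal.ofReal_sum_of_nonneg (fun j _ => Real.rpow_nonneg (abs_nonneg _) m')]
  calc ∫⁻ ω, ENNReal.ofReal (KK Y n I ω ^ m') ∂μ
      ≤ ∫⁻ ω, (ENNReal.ofReal 1 +
          ∑ j ∈ Finset.Icc (-(I+1 : ℤ)) (I+1), ENNReal.ofReal (|Y (n - j) ω| ^ m')) ∂μ :=
        lintegral_mono hptw
    _ = ENNReal.ofReal 1 + ∑ j ∈ Finset.Icc (-(I+1 : ℤ)) (I+1),
          ∫⁻ ω, ENNReal.ofReal (|Y (n - j) ω| ^ m') ∂μ := by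
        rw [lintegral_add_left measurable_const, lintegral_const]
        simp only [measure_univ, mul_one]
        rw [lintegral_finset_sum]
        exact fun j _ => hmeasf.comp (hmeas (n - j))
    _ = ENNReal.ofReal 1 + ∑ j ∈ Finset.Icc (-(I+1 : ℤ)) (I+1), C := by
        congr 1
        refine Finset.sum_congr rfl (fun j _ => ?_)
        exact lintegral_shift μ Y hmeas hstat (n - j) hmeasf
    _ = 1 + (2 * I + 3) * C := by
        rw [Finset.sum_const]
        congr 1
        · simp
        · rw [nsmul_eq_mul]
          congr 1
          rw [Int.card_Icc]
          have h1 : ((I:ℤ)+1+1 - -((I:ℤ)+1)) = 2*(I:ℤ)+3 := by ring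
          rw [h1]
          have h2 : (2*(I:ℤ)+3).toNat = 2*I+3 := by omega
          rw [h2]
          push_cast
          ring
    _ ≤ (2 * I + 3) * (C + 1) := by
        rw [mul_add, mul_one, add_comm]
        refine add_le_add le_rfl ?_
        calc (1:ENNReal) ≤ 3 := by norm_num
          _ ≤ 2*I+3 := le_add_self
end Aux3
section Aux4
open ENNReal
variable {Ω : Type*} [MeasurableSpace Ω]

lemma C_ne_top (μ : Measure Ω) {Y : ℤ → Ω → ℝ} {m' : ℝ}
    (hmom : Integrable (fun ω => |Y 0 ω| ^ m') μ) :
    ∫⁻ ω, ENNReal.ofReal (|Y 0 ω| ^ m') ∂μ ≠ ∞ := by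
  refine ne_of_lt (lt_of_le_of_lt (lintegral_mono fun ω => ?_) hmom.2)
  exact Real.ofReal_le_enorm _

lemma eLpNorm_KKpow_le (μ : Measure Ω) [IsProbabilityMeasure μ]
    (Y : ℤ → Ω → ℝ) (hmeas : ∀ t, Measurable (Y t)) (hstat : IsStrictlyStationary μ Y)
    {ℓ m m' : ℝ} (hℓ : 0 < ℓ) (hm : 1 ≤ m) (hm' : (ℓ+1)*m ≤ m') (n : ℤ) (I : ℕ) :
    eLpNorm (fun ω => KK Y n I ω ^ (ℓ+1)) (ENNReal.ofReal m) μ ≤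
      (2*I+3) * ((∫⁻ ω, ENNReal.ofReal (|Y 0 ω| ^ m') ∂μ) + 1) := by
  set C := ∫⁻ ω, ENNReal.ofReal (|Y 0 ω| ^ m') ∂μ with hCdef
  have hm0 : 0 < m := lt_of_lt_of_le zero_lt_one hm
  have hp0 : ENNReal.ofReal m ≠ 0 := by
    simp [ENNReal.ofReal_eq_zero]; linarith
  have hpt : ENNReal.ofReal m ≠ ∞ := ENNReal.ofReal_ne_top
  have hm'0 : 0 ≤ m' := le_trans (by positivity) hm'
  rw [eLpNorm_eq_lintegral_rpow_enorm_toReal hp0 hpt]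
  have htr : (ENNReal.ofReal m).toReal = m := ENNReal.toReal_ofReal hm0.le
  rw [htr]
  have hptw : ∀ ω, (‖KK Y n I ω ^ (ℓ+1)‖₊ : ℝ≥0∞) ^ m ≤ ENNReal.ofReal (KK Y n I ω ^ m') := by
    intro ω
    have hK0 : (0:ℝ) ≤ KK Y n I ω := (KK_pos Y n I ω).le
    have hK1 : (1:ℝ) ≤ KK Y n I ω := one_le_KK Y n I ω
    have h1 : (‖KK Y n I ω ^ (ℓ+1)‖₊ : ℝ≥0∞) = ENNReal.ofReal (KK Y n I ω ^ (ℓ+1)) := by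
      rw [← enorm_eq_nnnorm, ← ofReal_norm, Real.norm_eq_abs,
        abs_of_nonneg (Real.rpow_nonneg hK0 _)]
    rw [h1, ENNReal.ofReal_rpow_of_nonneg (Real.rpow_nonneg hK0 _) hm0.le,
      ← Real.rpow_mul hK0]
    exact ENNReal.ofReal_le_ofReal (Real.rpow_le_rpow_of_exponent_le hK1 hm')
  calc (∫⁻ ω, (‖KK Y n I ω ^ (ℓ+1)‖₊ : ℝ≥0∞) ^ m ∂μ) ^ (1/m)
      ≤ (∫⁻ ω, ENNReal.ofReal (KK Y n I ω ^ m') ∂μ) ^ (1/m) :=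
        ENNReal.rpow_le_rpow (lintegral_mono hptw) (by positivity)
    _ ≤ ((2*I+3) * (C + 1)) ^ (1/m) :=
        ENNReal.rpow_le_rpow (moment_KK μ Y hmeas hstat hm'0 n I) (by positivity)
    _ ≤ ((2*I+3) * (C + 1)) ^ (1:ℝ) := by
        refine ENNReal.rpow_le_rpow_of_exponent_le ?_ ?_
        · calc (1:ℝ≥0∞) = 1 * 1 := (one_mul 1).symm
            _ ≤ (2*I+3) * (C + 1) := by
              refine mul_le_mul' ?_ le_add_self
              calc (1:ℝ≥0∞) ≤ 3 := by norm_num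
                _ ≤ 2*I+3 := le_add_self
        · rw [div_le_one_iff]
          left
          exact ⟨hm0, by linarith⟩
    _ = (2*I+3) * (C + 1) := ENNReal.rpow_one _

lemma eLpNorm_delta_le (μ : Measure Ω) [IsProbabilityMeasure μ]
    (Y : ℤ → Ω → ℝ) (hmeas : ∀ t, Measurable (Y t)) (hstat : IsStrictlyStationary μ Y)
    {H : (ℤ → ℝ) → ℝ} {ℓ : ℝ} (hℓ : 0 < ℓ) {bw : ℤ → ℝ} (hbw : ∀ s, 0 ≤ bw s)
    (hstar : StarCondition H ℓ bw)
    {m m' : ℝ} (hm : 1 ≤ m) (hm' : (ℓ+1)*m ≤ m') (n : ℤ) (I : ℕ) :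
    eLpNorm (fun ω => H (truncSeq Y n (I+1) ω) - H (truncSeq Y n I ω)) (ENNReal.ofReal m) μ ≤
      ENNReal.ofReal (bw ((I:ℤ)+1) + bw (-((I:ℤ)+1))) *
        ((2*I+3) * ((∫⁻ ω, ENNReal.ofReal (|Y 0 ω| ^ m') ∂μ) + 1)) := by
  set β := bw ((I:ℤ)+1) + bw (-((I:ℤ)+1)) with hβ
  have hβ0 : 0 ≤ β := add_nonneg (hbw _) (hbw _)
  have h1 : eLpNorm (fun ω => H (truncSeq Y n (I+1) ω) - H (truncSeq Y n I ω))
      (ENNReal.ofReal m) μ ≤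
      eLpNorm (β • (fun ω => KK Y n I ω ^ (ℓ+1))) (ENNReal.ofReal m) μ := by
    refine eLpNorm_mono (fun ω => ?_)
    rw [Real.norm_eq_abs, Real.norm_eq_abs, Pi.smul_apply, smul_eq_mul]
    refine (star_step hℓ hbw hstar Y n I ω).trans (le_abs_self _)
  rw [eLpNorm_const_smul] at h1
  refine h1.trans ?_
  exact mul_le_mul' (le_of_eq (Real.enorm_eq_ofReal hβ0))
    (eLpNorm_KKpow_le μ Y hmeas hstat hℓ hm hm' n I)

lemma sum_B_ne_top (μ : Measure Ω) {Y : ℤ → Ω → ℝ} {m' : ℝ}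
    (hmom : Integrable (fun ω => |Y 0 ω| ^ m') μ)
    {bw : ℤ → ℝ} (hbw : ∀ s, 0 ≤ bw s)
    (hL : Summable (fun j : ℤ => |(j : ℝ)| * bw j)) :
    (∑' I : ℕ, ENNReal.ofReal (bw ((I:ℤ)+1) + bw (-((I:ℤ)+1))) *
        ((2*I+3) * ((∫⁻ ω, ENNReal.ofReal (|Y 0 ω| ^ m') ∂μ) + 1))) ≠ ∞ := by
  set C := ∫⁻ ω, ENNReal.ofReal (|Y 0 ω| ^ m') ∂μ with hCdef
  have hC : C ≠ ∞ := C_ne_top μ hmom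
  set g : ℕ → ℝ := fun I => (bw ((I:ℤ)+1) + bw (-((I:ℤ)+1))) * (2*I+3) with hg
  have hg0 : ∀ I, 0 ≤ g I := fun I =>
    mul_nonneg (add_nonneg (hbw _) (hbw _)) (by positivity)
  have hgs : Summable g := by
    have h1 : Summable (fun I : ℕ => |(((I:ℤ)+1 : ℤ) : ℝ)| * bw ((I:ℤ)+1)) :=
      hL.comp_injective (fun a b hab => by omega)
    have h2 : Summable (fun I : ℕ => |((-((I:ℤ)+1) : ℤ) : ℝ)| * bw (-((I:ℤ)+1))) :=
      hL.comp_injective (fun a b hab => by omega)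
    refine Summable.of_nonneg_of_le hg0 (fun I => ?_) (((h1.add h2).mul_left 5))
    have habs : |(((I:ℤ)+1 : ℤ) : ℝ)| = (I:ℝ)+1 := by
      rw [abs_of_nonneg] <;> push_cast <;> [skip; positivity]
      norm_num
    have habs2 : |((-((I:ℤ)+1) : ℤ) : ℝ)| = (I:ℝ)+1 := by
      push_cast
      rw [abs_neg, abs_of_nonneg] <;> positivity
    rw [hg]
    simp only [habs, habs2]
    have : (2*(I:ℝ)+3) ≤ 5*((I:ℝ)+1) := by linarith [Nat.cast_nonneg (α := ℝ) I]
    calc (bw ((I:ℤ)+1) + bw (-((I:ℤ)+1))) * (2*(I:ℝ)+3)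
        ≤ (bw ((I:ℤ)+1) + bw (-((I:ℤ)+1))) * (5*((I:ℝ)+1)) := by
          refine mul_le_mul_of_nonneg_left this (add_nonneg (hbw _) (hbw _))
      _ = 5 * (((I:ℝ)+1) * bw ((I:ℤ)+1) + ((I:ℝ)+1) * bw (-((I:ℤ)+1))) := by ring
  have hkey : ∀ I : ℕ, ENNReal.ofReal (bw ((I:ℤ)+1) + bw (-((I:ℤ)+1))) * ((2*I+3) * (C+1))
      = ENNReal.ofReal (g I) * (C + 1) := by
    intro I
    rw [hg]
    rw [ENNReal.ofReal_mul (add_nonneg (hbw _) (hbw _))]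
    rw [← mul_assoc]
    congr 2
    rw [ENNReal.ofReal_add (by positivity) (by norm_num),
      ENNReal.ofReal_mul (by norm_num)]
    norm_num [ENNReal.ofReal_natCast]
  simp_rw [hkey]
  rw [ENNReal.tsum_mul_right]
  refine ENNReal.mul_ne_top ?_ (by simp [hC])
  rw [← ENNReal.ofReal_tsum_of_nonneg hg0 hgs]
  exact ENNReal.ofReal_ne_top
end Aux4
section Aux5
variable {Ω : Type*} [MeasurableSpace Ω]

lemma map_trunc_eq (μ : Measure Ω) (Y : ℤ → Ω → ℝ) (hmeas : ∀ t, Measurable (Y t))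
    (hstat : IsStrictlyStationary μ Y) (H : (ℤ → ℝ) → ℝ) (hH : Measurable H)
    (t : ℤ) (u : ℕ) (s : Fin u → ℤ) (I : ℕ) :
    Measure.map (fun ω (i : Fin u) => H (truncSeq Y (s i + t) I ω)) μ
      = Measure.map (fun ω (i : Fin u) => H (truncSeq Y (s i) I ω)) μ := by
  set N := 2*I+1 with hN
  have hidx : ∀ j : ℤ, |j| ≤ (I : ℤ) → ((I : ℤ) - j).toNat < N := by
    intro j hj
    rcases abs_le.1 hj with ⟨h1, h2⟩
    omega
  set e : Fin u × Fin N → ℤ := fun q => s q.1 + (q.2 : ℤ) - I with he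
  set s' : Fin (u*N) → ℤ := fun k => e (finProdFinEquiv.symm k) with hs'
  set r : (Fin (u*N) → ℝ) → (Fin u × Fin N → ℝ) := fun w q => w (finProdFinEquiv q) with hr
  have hrm : Measurable r := measurable_pi_lambda _ (fun q => measurable_pi_apply _)
  set Φ : (Fin u × Fin N → ℝ) → (Fin u → ℝ) := fun v i =>
    H (fun j => if h : |j| ≤ (I : ℤ) then v (i, ⟨((I : ℤ) - j).toNat, hidx j h⟩) else 0) with hΦ
  have hΦm : Measurable Φ := by
    refine measurable_pi_lambda _ (fun i => hH.comp (measurable_pi_lambda _ (fun j => ?_)))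
    by_cases hj : |j| ≤ (I : ℤ)
    · simp only [dif_pos hj]; exact measurable_pi_apply _
    · simp only [dif_neg hj]; exact measurable_const
  have hid : ∀ (c : ℤ) (ω : Ω), (fun i => H (truncSeq Y (s i + c) I ω))
      = Φ (r (fun k => Y (s' k + c) ω)) := by
    intro c ω
    funext i
    rw [hΦ]
    congr 1
    funext j
    by_cases hj : |j| ≤ (I : ℤ)
    · rw [dif_pos hj]
      simp only [hr, hs']
      rw [Equiv.symm_apply_apply]
      simp only [he]
      rw [truncSeq, if_pos hj]
      congr 1
      rcases abs_le.1 hj with ⟨h1, h2⟩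
      have hval : (((⟨((I : ℤ) - j).toNat, hidx j hj⟩ : Fin N) : ℕ) : ℤ) = (I : ℤ) - j := by
        simp only [Fin.val_mk]
        exact Int.toNat_of_nonneg (by omega)
      rw [hval]
      ring
    · rw [dif_neg hj, truncSeq, if_neg hj]
  have hYm : ∀ c : ℤ, Measurable (fun ω (k : Fin (u*N)) => Y (s' k + c) ω) :=
    fun c => measurable_pi_lambda _ (fun k => hmeas _)
  have hstep : ∀ c : ℤ, Measure.map (fun ω (i : Fin u) => H (truncSeq Y (s i + c) I ω)) μ
      = Measure.map (Φ ∘ r) (Measure.map (fun ω (k : Fin (u*N)) => Y (s' k + c) ω) μ) := by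
    intro c
    rw [Measure.map_map (hΦm.comp hrm) (hYm c)]
    congr 1
    funext ω
    exact hid c ω
  have h0 : Measure.map (fun ω (i : Fin u) => H (truncSeq Y (s i) I ω)) μ
      = Measure.map (Φ ∘ r) (Measure.map (fun ω (k : Fin (u*N)) => Y (s' k) ω) μ) := by
    have := hstep 0
    simpa using this
  rw [hstep t, h0, hstat t (u*N) s']
end Aux5
theorem bernoulli_shift_exists_nonlipschitz
    {Ω : Type*} [MeasurableSpace Ω] (μ : Measure Ω) [IsProbabilityMeasure μ]
    (Y : ℤ → Ω → ℝ) (hmeas : ∀ t, Measurable (Y t))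
    (hstat : IsStrictlyStationary μ Y)
    (H : (ℤ → ℝ) → ℝ) (hH : Measurable H)
    (ℓ : ℝ) (hℓ : 0 < ℓ) (bw : ℤ → ℝ) (hbw : ∀ s, 0 ≤ bw s)
    (hstar : StarCondition H ℓ bw)
    (hL : Summable (fun j : ℤ => |(j : ℝ)| * bw j))
    (m m' : ℝ) (hm : 1 ≤ m) (hm' : (ℓ + 1) * m ≤ m')
    (hmom : Integrable (fun ω => |Y 0 ω| ^ m') μ) :
    ∃ X : ℤ → Ω → ℝ,
      IsBernoulliShift μ Y H (ENNReal.ofReal m) X ∧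
      IsStrictlyStationary μ X := by
  classical
  set p : ENNReal := ENNReal.ofReal m with hp
  have hm0 : 0 < m := lt_of_lt_of_le zero_lt_one hm
  have hp1 : 1 ≤ p := by
    rw [hp, ← ENNReal.ofReal_one]; exact ENNReal.ofReal_le_ofReal hm
  set C := ∫⁻ ω, ENNReal.ofReal (|Y 0 ω| ^ m') ∂μ with hCdef
  have hC : C ≠ ⊤ := C_ne_top μ hmom
  set G : ℤ → ℕ → Ω → ℝ := fun n I ω => H (truncSeq Y n I ω) with hGdef
  have hGm : ∀ n I, Measurable (G n I) := fun n I => hH.comp (measurable_truncSeq Y hmeas n I)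
  set B : ℕ → ENNReal := fun I =>
    ENNReal.ofReal (bw ((I:ℤ)+1) + bw (-((I:ℤ)+1))) * ((2*I+3) * (C+1)) with hBdef
  have hBsum : (∑' I, B I) ≠ ⊤ := sum_B_ne_top μ hmom hbw hL
  have hΔ : ∀ n I, eLpNorm (fun ω => G n (I+1) ω - G n I ω) p μ ≤ B I := fun n I =>
    eLpNorm_delta_le μ Y hmeas hstat hℓ hbw hstar hm hm' n I
  -- a.e. convergence of the truncated shifts
  have h_ex : ∀ n : ℤ, ∀ᵐ ω ∂μ, ∃ l, Tendsto (fun I => G n I ω) atTop (nhds l) := by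
    intro n
    have hmeasΔ : ∀ I : ℕ, Measurable fun ω => (‖G n (I+1) ω - G n I ω‖₊ : ENNReal) :=
      fun I => ((hGm n (I+1)).sub (hGm n I)).enorm
    have h1 : ∫⁻ ω, ∑' I, (‖G n (I+1) ω - G n I ω‖₊ : ENNReal) ∂μ ≤ ∑' I, B I := by
      rw [lintegral_tsum (fun I => (hmeasΔ I).aemeasurable)]
      refine ENNReal.tsum_le_tsum (fun I => ?_)
      have h2 := eLpNorm_le_eLpNorm_of_exponent_le (μ := μ) hp1
        (((hGm n (I+1)).sub (hGm n I)).aestronglyMeasurable)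
      rw [eLpNorm_one_eq_lintegral_enorm] at h2
      exact h2.trans (hΔ n I)
    have h2 : ∀ᵐ ω ∂μ, (∑' I, (‖G n (I+1) ω - G n I ω‖₊ : ENNReal)) < ⊤ :=
      ae_lt_top (Measurable.ennreal_tsum hmeasΔ) (ne_of_lt (lt_of_le_of_lt h1 hBsum.lt_top))
    filter_upwards [h2] with ω hω
    have hsummable : Summable fun I => ‖G n (I+1) ω - G n I ω‖ := by
      have h3 := ENNReal.tsum_coe_ne_top_iff_summable.1 (ne_of_lt hω)
      have h4 := NNReal.summable_coe.2 h3
      simpa [coe_nnnorm] using h4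
    have hsum2 : Summable fun I => G n (I+1) ω - G n I ω := hsummable.of_norm
    refine ⟨∑' I, (G n (I+1) ω - G n I ω) + G n 0 ω, ?_⟩
    have h3 := hsum2.hasSum.tendsto_sum_nat
    have h4 : ∀ K, ∑ i ∈ Finset.range K, (G n (i+1) ω - G n i ω) = G n K ω - G n 0 ω :=
      fun K => Finset.sum_range_sub (fun i => G n i ω) K
    simp_rw [h4] at h3
    have h5 := h3.add_const (G n 0 ω)
    simpa using h5
  have hXex : ∀ n, ∃ Xn : Ω → ℝ, Measurable Xn ∧
      ∀ᵐ ω ∂μ, Tendsto (fun I => G n I ω) atTop (nhds (Xn ω)) := fun n =>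
    measurable_limit_of_tendsto_metrizable_ae (fun I => (hGm n I).aemeasurable) (h_ex n)
  choose X hXm hXae using hXex
  -- tail estimates
  have hJK : ∀ (n : ℤ) (J K : ℕ), J ≤ K →
      eLpNorm (fun ω => G n J ω - G n K ω) p μ ≤ ∑' i, B (i + J) := by
    intro n J K hJKle
    have hsplit : (fun ω => G n J ω - G n K ω)
        = -fun ω => (∑ i ∈ Finset.Ico J K, (G n (i+1) ω - G n i ω)) := by
      funext ω
      rw [Pi.neg_apply]
      rw [Finset.sum_Ico_eq_sub _ hJKle,
        Finset.sum_range_sub (fun i => G n i ω), Finset.sum_range_sub (fun i => G n i ω)]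
      ring
    rw [hsplit, eLpNorm_neg]
    have hsum_fun : (fun ω => ∑ i ∈ Finset.Ico J K, (G n (i+1) ω - G n i ω))
        = ∑ i ∈ Finset.Ico J K, (fun ω => G n (i+1) ω - G n i ω) := by
      funext ω; simp
    rw [hsum_fun]
    refine (eLpNorm_sum_le
      (fun i _ => ((hGm n (i+1)).sub (hGm n i)).aestronglyMeasurable) hp1).trans ?_
    calc ∑ i ∈ Finset.Ico J K, eLpNorm (fun ω => G n (i+1) ω - G n i ω) p μ
        ≤ ∑ i ∈ Finset.Ico J K, B i := Finset.sum_le_sum (fun i _ => hΔ n i)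
      _ = ∑ i ∈ Finset.range (K - J), B (J + i) := Finset.sum_Ico_eq_sum_range _ _ _
      _ ≤ ∑' i, B (J + i) := ENNReal.sum_le_tsum _
      _ = ∑' i, B (i + J) := tsum_congr (fun i => by rw [add_comm])
  have hXJ : ∀ (n : ℤ) (J : ℕ), eLpNorm (fun ω => G n J ω - X n ω) p μ ≤ ∑' i, B (i + J) := by
    intro n J
    have hae2 : ∀ᵐ ω ∂μ, Tendsto (fun K => G n J ω - G n K ω) atTop
        (nhds (G n J ω - X n ω)) := by
      filter_upwards [hXae n] with ω hω using tendsto_const_nhds.sub hω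
    refine (Lp.eLpNorm_lim_le_liminf_eLpNorm
      (fun K => ((hGm n J).sub (hGm n K)).aestronglyMeasurable) _ hae2).trans ?_
    refine Filter.liminf_le_of_frequently_le ?_
    exact (Filter.eventually_atTop.2 ⟨J, fun K hK => hJK n J K hK⟩).frequently
  -- G n 0 has finite L^p norm
  have hG0 : ∀ n : ℤ, eLpNorm (G n 0) p μ < ⊤ := by
    intro n
    have hptb : ∀ ω, |G n 0 ω| ≤ (|H (fun _ => (0:ℝ))| + bw 0) * KK Y n 0 ω ^ (ℓ+1) := by
      intro ω
      set K := KK Y n 0 ω with hK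
      have hK1 : 1 ≤ K := one_le_KK _ _ _ _
      have hKp : 1 ≤ K ^ (ℓ+1) := Real.one_le_rpow hK1 (by linarith)
      have hY : |Y n ω| ≤ K := by
        have h6 := abs_le_KK Y n 0 ω (j := 0) (by norm_num)
        rw [sub_zero] at h6
        exact h6
      have hKK : K ≤ K ^ (ℓ+1) := by
        calc K = K ^ (1:ℝ) := (Real.rpow_one _).symm
          _ ≤ K ^ (ℓ+1) := Real.rpow_le_rpow_of_exponent_le hK1 (by linarith)
      have hndiff : ∀ i : ℤ, i ≠ 0 → truncSeq Y n 0 ω i = (fun _ => (0:ℝ)) i := by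
        intro i hi
        rw [truncSeq, if_neg]
        rcases abs_cases i with ⟨he, _⟩ | ⟨he, _⟩ <;> simp <;> omega
      have hzf : (Function.support (fun _ : ℤ => (0:ℝ))).Finite := by simp
      have hstar0 := hstar (truncSeq Y n 0 ω) (fun _ => 0)
        (truncSeq_support_finite Y n 0 ω) hzf 0 hndiff
      have hupd0 : Function.update (truncSeq Y n 0 ω) 0 0 = (fun _ : ℤ => (0:ℝ)) := by
        funext i
        by_cases hi : i = 0
        · rw [hi, Function.update_self]
        · rw [Function.update_of_ne hi]; exact hndiff i hi
      rw [hupd0] at hstar0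
      have hsup0 : (⨆ i : ℤ, |(fun _ : ℤ => (0:ℝ)) i|) = 0 := by simp
      rw [hsup0, Real.zero_rpow (ne_of_gt hℓ), max_eq_right zero_le_one, mul_one] at hstar0
      have hx0 : truncSeq Y n 0 ω 0 = Y n ω := by simp [truncSeq]
      rw [hx0] at hstar0
      have h7 : |G n 0 ω| ≤ |G n 0 ω - H (fun _ => 0)| + |H (fun _ => (0:ℝ))| := by
        have := abs_add_le (G n 0 ω - H (fun _ => 0)) (H (fun _ => 0))
        simpa using this
      have h8 : bw 0 * |Y n ω - 0| ≤ bw 0 * K ^ (ℓ+1) :=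
        mul_le_mul_of_nonneg_left (by rw [sub_zero]; exact hY.trans hKK) (hbw 0)
      have h9 : |H (fun _ : ℤ => (0:ℝ))| ≤ |H (fun _ : ℤ => (0:ℝ))| * K ^ (ℓ+1) :=
        le_mul_of_one_le_right (abs_nonneg _) hKp
      have h10 : |G n 0 ω - H (fun _ => 0)| ≤ bw 0 * K ^ (ℓ+1) := hstar0.trans h8
      calc |G n 0 ω| ≤ |G n 0 ω - H (fun _ => 0)| + |H (fun _ => (0:ℝ))| := h7
        _ ≤ bw 0 * K ^ (ℓ+1) + |H (fun _ : ℤ => (0:ℝ))| * K ^ (ℓ+1) := add_le_add h10 h9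
        _ = (|H (fun _ => (0:ℝ))| + bw 0) * K ^ (ℓ+1) := by ring
    have hmono : eLpNorm (G n 0) p μ ≤
        eLpNorm ((|H (fun _ => (0:ℝ))| + bw 0) • fun ω => KK Y n 0 ω ^ (ℓ+1)) p μ := by
      refine eLpNorm_mono (fun ω => ?_)
      rw [Real.norm_eq_abs, Real.norm_eq_abs, Pi.smul_apply, smul_eq_mul]
      exact (hptb ω).trans (le_abs_self _)
    rw [eLpNorm_const_smul] at hmono
    refine lt_of_le_of_lt hmono ?_
    refine ENNReal.mul_lt_top ENNReal.coe_lt_top ?_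
    refine lt_of_le_of_lt (eLpNorm_KKpow_le μ Y hmeas hstat hℓ hm hm' n 0) ?_
    refine ENNReal.mul_lt_top (by norm_num) ?_
    exact ENNReal.add_lt_top.2 ⟨hC.lt_top, ENNReal.one_lt_top⟩
  -- MemLp
  have hmem : ∀ n : ℤ, MemLp (X n) p μ := by
    intro n
    refine ⟨(hXm n).aestronglyMeasurable, ?_⟩
    have hb := Lp.eLpNorm_lim_le_liminf_eLpNorm (p := p) (fun I => (hGm n I).aestronglyMeasurable)
      (X n) (hXae n)
    have hGIb : ∀ I, eLpNorm (G n I) p μ ≤ eLpNorm (G n 0) p μ + ∑' i, B i := by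
      intro I
      have hdec : G n I = fun ω => G n 0 ω + ∑ i ∈ Finset.range I, (G n (i+1) ω - G n i ω) := by
        funext ω; rw [Finset.sum_range_sub (fun i => G n i ω)]; ring
      rw [hdec]
      have hSm : Measurable fun ω => ∑ i ∈ Finset.range I, (G n (i+1) ω - G n i ω) :=
        Finset.measurable_sum _ (fun i _ => (hGm n (i+1)).sub (hGm n i))
      refine le_trans (eLpNorm_add_le (hGm n 0).aestronglyMeasurable
        hSm.aestronglyMeasurable hp1) ?_
      refine add_le_add le_rfl ?_
      have hsum_fun : (fun ω => ∑ i ∈ Finset.range I, (G n (i+1) ω - G n i ω))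
          = ∑ i ∈ Finset.range I, (fun ω => G n (i+1) ω - G n i ω) := by
        funext ω; simp
      rw [hsum_fun]
      refine (eLpNorm_sum_le
        (fun i _ => ((hGm n (i+1)).sub (hGm n i)).aestronglyMeasurable) hp1).trans ?_
      refine (Finset.sum_le_sum fun i _ => hΔ n i).trans ?_
      exact ENNReal.sum_le_tsum _
    have hliminf_le : atTop.liminf (fun I => eLpNorm (G n I) p μ)
        ≤ eLpNorm (G n 0) p μ + ∑' i, B i :=
      Filter.liminf_le_of_frequently_le (Filter.Frequently.of_forall hGIb)
    exact lt_of_le_of_lt (hb.trans hliminf_le)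
      (ENNReal.add_lt_top.2 ⟨hG0 n, hBsum.lt_top⟩)
  refine ⟨X, ?_, ?_⟩
  · intro n
    refine ⟨hmem n, ?_⟩
    have htail : Tendsto (fun J : ℕ => ∑' i, B (i + J)) atTop (nhds 0) :=
      ENNReal.tendsto_sum_nat_add B hBsum
    exact tendsto_of_tendsto_of_tendsto_of_le_of_le tendsto_const_nhds htail
      (fun J => zero_le) (hXJ n)
  · intro t u s
    haveI : IsProbabilityMeasure (Measure.map (fun ω (i : Fin u) => X (s i + t) ω) μ) :=
      Measure.isProbabilityMeasure_map (measurable_pi_lambda _ (fun i => hXm _)).aemeasurable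
    refine MeasureTheory.ext_of_forall_lintegral_eq_of_IsFiniteMeasure (fun f => ?_)
    have hfm : Measurable fun v : Fin u → ℝ => (f v : ENNReal) := f.measurable_coe_ennreal_comp
    rw [lintegral_map hfm (measurable_pi_lambda _ (fun i => hXm _)),
        lintegral_map hfm (measurable_pi_lambda _ (fun i => hXm _))]
    have key : ∀ c : ℤ, Tendsto (fun I => ∫⁻ ω, f (fun i => G (s i + c) I ω) ∂μ) atTop
        (nhds (∫⁻ ω, f (fun i => X (s i + c) ω) ∂μ)) := by
      intro c
      refine tendsto_lintegral_of_dominated_convergence (fun _ => (nndist 0 f : ENNReal))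
        (fun I => hfm.comp (measurable_pi_lambda _ (fun i => hGm _ I)))
        (fun I => Filter.Eventually.of_forall
          (fun ω => ENNReal.coe_le_coe.2 (f.apply_le_nndist_zero _)))
        (by rw [lintegral_const]; exact ENNReal.mul_ne_top ENNReal.coe_ne_top (by simp)) ?_
      have hae : ∀ᵐ ω ∂μ, ∀ i : Fin u,
          Tendsto (fun I => G (s i + c) I ω) atTop (nhds (X (s i + c) ω)) :=
        ae_all_iff.2 (fun i => hXae (s i + c))
      filter_upwards [hae] with ω hω
      have htuple : Tendsto (fun I => fun i : Fin u => G (s i + c) I ω) atTop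
          (nhds (fun i => X (s i + c) ω)) := tendsto_pi_nhds.2 hω
      exact (ENNReal.continuous_coe.tendsto _).comp ((f.continuous.tendsto _).comp htuple)
    have key0 := key 0
    simp_rw [add_zero] at key0
    have keyt := key t
    have heq : (fun I => ∫⁻ ω, f (fun i => G (s i + t) I ω) ∂μ)
        = fun I => ∫⁻ ω, f (fun i => G (s i) I ω) ∂μ := by
      funext I
      rw [← lintegral_map hfm (measurable_pi_lambda _ (fun i => hGm _ I)),
          ← lintegral_map hfm (measurable_pi_lambda _ (fun i => hGm _ I)),
          map_trunc_eq μ Y hmeas hstat H hH t u s I]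
    rw [heq] at keyt
    exact tendsto_nhds_unique keyt key0
end
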